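/- arXiv:math/0209301 — 4 statements merged into one kernel-verified Lean document; each statement's English description precedes it below -/
import Mathlib

section
/- Non-degenerate coefficient functions form a Zariski open subset of the affine space of all coefficient functions f : Δ → ℂ, provided this subset is nonempty. More precisely: the set of f ∈ ℂ^Δ such that dim_ℂ ℂ[K]/(z_n : n ∈ N) is finite is Zariski open in ℂ^Δ. -/
noncomputable section

/-- The semigroup ring `ℂ[K]` of the lattice points `S = K ∩ M ⊆ ℤ^r` of a cone `K`. -/
abbrev SGA (r : ℕ) (S : AddSubmonoid (Fin r → ℤ)) : Type := AddMonoidAlgebra ℂ ↥S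

/-- `S` is the set of lattice points of the rational polyhedral cone generated by the
finite set `gens`. -/
def IsConeSemigroup (r : ℕ) (S : AddSubmonoid (Fin r → ℤ))
    (gens : Finset (Fin r → ℤ)) : Prop :=
  ∀ m : Fin r → ℤ, m ∈ S ↔ ∃ c : (Fin r → ℤ) → ℚ,
    (∀ g ∈ gens, 0 ≤ c g) ∧ ∀ i, (m i : ℚ) = ∑ g ∈ gens, c g * (g i : ℚ)

/-- The element `z_n = Σ_{m ∈ Δ} f(m) (m · n) [m]` of `ℂ[K]`. -/
def zEl {r : ℕ} {S : AddSubmonoid (Fin r → ℤ)} (Δfin : Finset ↥S)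
    (f : ↥Δfin → ℂ) (n : Fin r → ℤ) : SGA r S :=
  ∑ m ∈ Δfin.attach,
    (f m * ((∑ i, ((m : ↥S) : Fin r → ℤ) i * n i : ℤ) : ℂ)) •
      AddMonoidAlgebra.single ((m : ↥S)) (1 : ℂ)

open Matrix

lemma surj_iff_det {ι κ K : Type*} [Fintype ι] [Fintype κ] [DecidableEq ι] [DecidableEq κ]
    [Field K] (M : Matrix ι κ K) :
    Function.Surjective M.mulVecLin ↔ ∃ sel : ι → κ, (M.submatrix id sel).det ≠ 0 := by
  constructor
  · intro h
    obtain ⟨g, hg⟩ := M.mulVecLin.exists_rightInverse_of_surjective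
      (LinearMap.range_eq_top.2 h)
    set Q : Matrix κ ι K := LinearMap.toMatrix' g with hQ
    have hQg : Q.mulVecLin = g := by
      rw [hQ, ← Matrix.toLin'_apply', Matrix.toLin'_toMatrix']
    have hMQ : M * Q = 1 := by
      have h1 : (M * Q).mulVecLin = (1 : Matrix ι ι K).mulVecLin := by
        rw [Matrix.mulVecLin_mul, hQg, hg, Matrix.mulVecLin_one]
      have h2 : Matrix.toLin' (M * Q) = Matrix.toLin' (1 : Matrix ι ι K) := by
        rw [Matrix.toLin'_apply', Matrix.toLin'_apply']; exact h1
      exact Matrix.toLin'.injective h2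
    -- expand det (M*Q) = 1 multilinearly in columns of M
    have hdet1 : (M * Q).det = 1 := by rw [hMQ, Matrix.det_one]
    have hexp : (M * Q).det =
        ∑ sel : ι → κ, (∏ j, Q (sel j) j) * (M.submatrix id sel).det := by
      have htr : (M * Q).det = (Qᵀ * Mᵀ).det := by
        rw [← Matrix.det_transpose (M * Q), Matrix.transpose_mul]
      rw [htr]
      have hrows : (Qᵀ * Mᵀ) = Matrix.of fun j => ∑ k, Q k j • Mᵀ k := by
        ext j i
        simp [Matrix.mul_apply, Matrix.transpose_apply, mul_comm]
      rw [hrows]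
      have this2 := (Matrix.detRowAlternating (R := K) (n := ι)).toMultilinearMap.map_sum
        (g := fun (j : ι) (k : κ) => Q k j • Mᵀ k)
      refine Eq.trans (by exact this2) ?_
      refine Finset.sum_congr rfl fun sel _ => ?_
      have hsmul := (Matrix.detRowAlternating (R := K) (n := ι)).toMultilinearMap.map_smul_univ
        (fun j => Q (sel j) j) (fun j => Mᵀ (sel j))
      refine Eq.trans (by exact hsmul) ?_
      rw [smul_eq_mul]
      congr 1
      have hsub : ((fun j => Mᵀ (sel j)) : Matrix ι ι K) = (M.submatrix id sel)ᵀ := by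
        ext j i; simp [Matrix.transpose_apply, Matrix.submatrix_apply]
      have h3 : (Matrix.detRowAlternating (R := K) (n := ι)).toMultilinearMap
          (fun j => Mᵀ (sel j)) = ((M.submatrix id sel)ᵀ).det := by
        rw [show ((fun j => Mᵀ (sel j)) : ι → ι → K) = ((M.submatrix id sel)ᵀ : Matrix ι ι K) from hsub]
        rfl
      rw [h3, Matrix.det_transpose]
    by_contra hno
    push_neg at hno
    rw [hdet1] at hexp
    have : (1 : K) = 0 := by
      rw [hexp]
      refine Finset.sum_eq_zero fun sel _ => ?_
      rw [hno sel, mul_zero]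
    exact one_ne_zero this
  · rintro ⟨sel, hdet⟩
    have hU : IsUnit (M.submatrix id sel) := by
      exact (Matrix.isUnit_iff_isUnit_det _).2 (isUnit_iff_ne_zero.2 hdet)
    obtain ⟨N, hN⟩ := hU.exists_right_inv
    intro u
    refine ⟨fun k => ∑ j, if sel j = k then N.mulVec u j else 0, ?_⟩
    ext i
    rw [Matrix.mulVecLin_apply]
    calc M.mulVec (fun k => ∑ j, if sel j = k then N.mulVec u j else 0) i
        = ∑ k, ∑ j, M i k * (if sel j = k then N.mulVec u j else 0) := by
          simp [Matrix.mulVec, dotProduct, Finset.mul_sum]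
      _ = ∑ j, ∑ k, (if sel j = k then M i k * N.mulVec u j else 0) := by
          rw [Finset.sum_comm]; exact Finset.sum_congr rfl fun j _ =>
            Finset.sum_congr rfl fun k _ => by split <;> simp
      _ = ∑ j, M i (sel j) * N.mulVec u j := by
          refine Finset.sum_congr rfl fun j _ => ?_
          simp
      _ = ((M.submatrix id sel).mulVec (N.mulVec u)) i := by
          simp [Matrix.mulVec, dotProduct]
      _ = ((M.submatrix id sel) * N).mulVec u i := by
          rw [Matrix.mulVec_mulVec]
      _ = u i := by rw [hN]; simp

def dgH {r : ℕ} (degd : Fin r → ℤ) (S : AddSubmonoid (Fin r → ℤ)) : ↥S →+ ℤ where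
  toFun m := ∑ i, (m : Fin r → ℤ) i * degd i
  map_zero' := by simp
  map_add' a b := by
    simp only [AddSubmonoid.coe_add, Pi.add_apply, add_mul, Finset.sum_add_distrib]

section cone
variable {r : ℕ} {S : AddSubmonoid (Fin r → ℤ)} {gens : Finset (Fin r → ℤ)}
  {degd : Fin r → ℤ}

lemma deg_cast (hgor : ∀ g ∈ gens, ∑ i, g i * degd i = 1) {m : Fin r → ℤ}
    {c : (Fin r → ℤ) → ℚ} (hc : ∀ i, (m i : ℚ) = ∑ g ∈ gens, c g * (g i : ℚ)) :
    ((∑ i, m i * degd i : ℤ) : ℚ) = ∑ g ∈ gens, c g := by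
  push_cast
  calc ∑ i, (m i : ℚ) * (degd i : ℚ)
      = ∑ i, (∑ g ∈ gens, c g * (g i : ℚ)) * (degd i : ℚ) := by
        refine Finset.sum_congr rfl fun i _ => by rw [hc i]
    _ = ∑ i, ∑ g ∈ gens, c g * (g i : ℚ) * (degd i : ℚ) := by
        refine Finset.sum_congr rfl fun i _ => ?_
        rw [Finset.sum_mul]
    _ = ∑ g ∈ gens, ∑ i, c g * (g i : ℚ) * (degd i : ℚ) := Finset.sum_comm
    _ = ∑ g ∈ gens, c g * ∑ i, (g i : ℚ) * (degd i : ℚ) := by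
        refine Finset.sum_congr rfl fun g _ => ?_
        rw [Finset.mul_sum]
        exact Finset.sum_congr rfl fun i _ => by ring
    _ = ∑ g ∈ gens, c g := by
        refine Finset.sum_congr rfl fun g hg => ?_
        have : ((∑ i, g i * degd i : ℤ) : ℚ) = 1 := by rw [hgor g hg]; norm_num
        push_cast at this
        rw [this, mul_one]

lemma deg_nonneg (hcone : IsConeSemigroup r S gens)
    (hgor : ∀ g ∈ gens, ∑ i, g i * degd i = 1) (m : ↥S) : 0 ≤ dgH degd S m := by
  obtain ⟨c, hc0, hc⟩ := (hcone m).1 m.2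
  have h := deg_cast hgor hc
  have : (0:ℚ) ≤ ∑ g ∈ gens, c g := Finset.sum_nonneg fun g hg => hc0 g hg
  rw [← h] at this
  exact_mod_cast this

lemma gens_mem (hcone : IsConeSemigroup r S gens) {g : Fin r → ℤ} (hg : g ∈ gens) : g ∈ S := by
  refine (hcone g).2 ⟨fun h => if h = g then 1 else 0, fun h _ => by positivity, fun i => ?_⟩
  dsimp only
  rw [show (∑ g1 ∈ gens, (if g1 = g then (1:ℚ) else 0) * (g1 i : ℚ))
      = ∑ g1 ∈ gens, (if g1 = g then ((g1 i : ℚ)) else 0) from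
    Finset.sum_congr rfl fun h _ => by split <;> simp]
  rw [Finset.sum_ite_eq' gens g (fun h => (h i : ℚ))]
  simp [hg]

lemma deg_gens (hgor : ∀ g ∈ gens, ∑ i, g i * degd i = 1) {g : Fin r → ℤ} (hg : g ∈ gens)
    (hgS : g ∈ S) : dgH degd S ⟨g, hgS⟩ = 1 := hgor g hg

lemma slice_finite (hcone : IsConeSemigroup r S gens)
    (hgor : ∀ g ∈ gens, ∑ i, g i * degd i = 1) (d : ℤ) :
    {m : ↥S | dgH degd S m = d}.Finite := by
  classical
  set C : ℤ := ∑ g ∈ gens, ∑ i, |g i| with hC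
  have hCg : ∀ g ∈ gens, ∀ i, |g i| ≤ C := by
    intro g hg i
    calc |g i| ≤ ∑ i, |g i| := Finset.single_le_sum (f := fun j => |g j|)
          (fun j _ => abs_nonneg _) (Finset.mem_univ i)
      _ ≤ C := Finset.single_le_sum (f := fun g => ∑ i, |g i|)
          (fun h _ => Finset.sum_nonneg fun j _ => abs_nonneg _) hg
  have hbound : ∀ m : ↥S, dgH degd S m = d → ∀ i, (m : Fin r → ℤ) i ∈ Set.Icc (-(d*C)) (d*C) := by
    intro m hm i
    obtain ⟨c, hc0, hc⟩ := (hcone m).1 m.2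
    have hsum : ((d : ℤ) : ℚ) = ∑ g ∈ gens, c g := by rw [← hm]; exact deg_cast hgor (hc)
    have habs : |((m : Fin r → ℤ) i : ℚ)| ≤ (d : ℚ) * (C : ℚ) := by
      rw [hc i]
      calc |∑ g ∈ gens, c g * (g i : ℚ)| ≤ ∑ g ∈ gens, |c g * (g i : ℚ)| :=
            Finset.abs_sum_le_sum_abs _ _
        _ ≤ ∑ g ∈ gens, c g * (C : ℚ) := by
            refine Finset.sum_le_sum fun g hg => ?_
            rw [abs_mul, abs_of_nonneg (hc0 g hg)]
            refine mul_le_mul_of_nonneg_left ?_ (hc0 g hg)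
            rw [← Int.cast_abs]
            exact_mod_cast hCg g hg i
        _ = (d : ℚ) * (C : ℚ) := by rw [← Finset.sum_mul, ← hsum]
    rw [Set.mem_Icc]
    have h1 : |(m : Fin r → ℤ) i| ≤ d * C := by exact_mod_cast (by push_cast at habs ⊢; exact habs : |((m : Fin r → ℤ) i : ℚ)| ≤ ((d * C : ℤ) : ℚ))
    exact abs_le.1 h1
  have hfin : ({v : Fin r → ℤ | ∀ i, v i ∈ Set.Icc (-(d*C)) (d*C)}).Finite := by
    have : {v : Fin r → ℤ | ∀ i, v i ∈ Set.Icc (-(d*C)) (d*C)} =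
        Set.pi Set.univ (fun _ => Set.Icc (-(d*C)) (d*C)) := by
      ext v
      constructor
      · intro h i _; exact h i
      · intro h i; exact h i (Set.mem_univ i)
    rw [this]
    exact Set.Finite.pi fun _ => Set.finite_Icc _ _
  have hsub : {m : ↥S | dgH degd S m = d} ⊆
      (fun m : ↥S => (m : Fin r → ℤ)) ⁻¹' {v | ∀ i, v i ∈ Set.Icc (-(d*C)) (d*C)} := by
    intro m hm
    exact hbound m hm
  exact Set.Finite.subset (Set.Finite.preimage (Set.injOn_of_injective Subtype.val_injective) hfin) hsub

lemma exists_split (hcone : IsConeSemigroup r S gens)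
    (hgor : ∀ g ∈ gens, ∑ i, g i * degd i = 1) {m : ↥S}
    (hm : (gens.card : ℤ) < dgH degd S m) :
    ∃ (gm m' : ↥S), (gm : Fin r → ℤ) ∈ gens ∧ m = gm + m' := by
  classical
  obtain ⟨c, hc0, hc⟩ := (hcone m).1 m.2
  have hsum : ((dgH degd S m : ℤ) : ℚ) = ∑ g ∈ gens, c g := deg_cast hgor hc
  have hex : ∃ g ∈ gens, 1 ≤ c g := by
    by_contra hno
    push_neg at hno
    have h1 : ∑ g ∈ gens, c g ≤ ∑ g ∈ gens, (1:ℚ) :=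
      Finset.sum_le_sum fun g hg => le_of_lt (hno g hg)
    rw [Finset.sum_const, nsmul_eq_mul, mul_one] at h1
    rw [← hsum] at h1
    have : (dgH degd S m : ℚ) < (gens.card : ℚ) + 1 := by linarith
    have h2 : ((gens.card : ℤ) : ℚ) < (dgH degd S m : ℚ) := by exact_mod_cast hm
    push_cast at h2
    linarith
  obtain ⟨g, hg, hcg⟩ := hex
  have hgS : g ∈ S := gens_mem hcone hg
  have hm'S : (m : Fin r → ℤ) - g ∈ S := by
    refine (hcone _).2 ⟨fun h => c h - (if h = g then 1 else 0), fun h hh => ?_, fun i => ?_⟩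
    · dsimp only
      rw [sub_nonneg]
      split
      · next he => subst he; linarith
      · linarith [hc0 h hh]
    · dsimp only
      rw [show ((((m : Fin r → ℤ) - g) i : ℤ) : ℚ) = ((m : Fin r → ℤ) i : ℚ) - (g i : ℚ) by
        simp]
      rw [hc i]
      rw [show ∑ h ∈ gens, (c h - if h = g then 1 else 0) * (h i : ℚ)
          = ∑ h ∈ gens, (c h * h i - if h = g then (h i : ℚ) else 0) from
        Finset.sum_congr rfl fun h _ => by split <;> ring]
      rw [Finset.sum_sub_distrib, Finset.sum_ite_eq' gens g (fun h => (h i : ℚ))]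
      simp [hg]
  refine ⟨⟨g, hgS⟩, ⟨(m : Fin r → ℤ) - g, hm'S⟩, hg, ?_⟩
  ext1
  simp

end cone

section graded
variable {r : ℕ} {S : AddSubmonoid (Fin r → ℤ)} {gens : Finset (Fin r → ℤ)}
  {degd : Fin r → ℤ} {Δfin : Finset ↥S}

abbrev GA (degd : Fin r → ℤ) (S : AddSubmonoid (Fin r → ℤ)) : ℤ → Submodule ℂ (SGA r S) :=
  AddMonoidAlgebra.gradeBy ℂ ⇑(dgH degd S)

lemma single_mem_GA {m : ↥S} {d : ℤ} (hd : dgH degd S m = d) (c : ℂ) :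
    AddMonoidAlgebra.single m c ∈ GA degd S d :=
  hd ▸ AddMonoidAlgebra.single_mem_gradeBy ⇑(dgH degd S) m c

lemma zEl_mem_GA (hΔ : ∀ m : ↥S, m ∈ Δfin ↔ ∑ i, (m : Fin r → ℤ) i * degd i = 1)
    (f : ↥Δfin → ℂ) (n : Fin r → ℤ) : zEl Δfin f n ∈ GA degd S 1 := by
  refine Submodule.sum_mem _ fun m _ => Submodule.smul_mem _ _ (single_mem_GA ?_ 1)
  exact (hΔ (m : ↥S)).1 m.2

lemma zEl_linear (Δfin : Finset ↥S) (f : ↥Δfin → ℂ) (n : Fin r → ℤ) :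
    zEl Δfin f n = ∑ i, n i • zEl Δfin f (Pi.single i 1) := by
  have hdot : ∀ (m : ↥S) (i : Fin r),
      (∑ j, (m : Fin r → ℤ) j * Pi.single (M := fun _ => ℤ) i 1 j) = (m : Fin r → ℤ) i := by
    intro m i
    rw [show (∑ j, (m : Fin r → ℤ) j * Pi.single (M := fun _ => ℤ) i 1 j)
        = ∑ j, (if j = i then (m : Fin r → ℤ) j else 0) from
      Finset.sum_congr rfl fun j _ => by rw [Pi.single_apply]; split <;> simp]
    rw [Finset.sum_ite_eq' Finset.univ i (fun j => (m : Fin r → ℤ) j)]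
    simp
  unfold zEl
  calc ∑ m ∈ Δfin.attach,
        (f m * ((∑ i, ((m : ↥S) : Fin r → ℤ) i * n i : ℤ) : ℂ)) •
          AddMonoidAlgebra.single ((m : ↥S)) (1 : ℂ)
      = ∑ m ∈ Δfin.attach, ∑ i, n i •
          ((f m * ((∑ j, ((m : ↥S) : Fin r → ℤ) j * Pi.single (M := fun _ => ℤ) i 1 j : ℤ) : ℂ)) •
            AddMonoidAlgebra.single ((m : ↥S)) (1 : ℂ)) := by
        refine Finset.sum_congr rfl fun m _ => ?_
        have h1 : ∀ i : Fin r, n i •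
            ((f m * ((∑ j, ((m : ↥S) : Fin r → ℤ) j * Pi.single (M := fun _ => ℤ) i 1 j : ℤ) : ℂ)) •
              AddMonoidAlgebra.single ((m : ↥S)) (1 : ℂ))
            = ((n i : ℂ) * (f m * (((m : ↥S) : Fin r → ℤ) i : ℂ))) •
              AddMonoidAlgebra.single ((m : ↥S)) (1 : ℂ) := by
          intro i
          rw [hdot (m : ↥S) i, ← Int.cast_smul_eq_zsmul ℂ, smul_smul]
        rw [Finset.sum_congr rfl fun i _ => h1 i, ← Finset.sum_smul]
        congr 1
        push_cast
        rw [Finset.mul_sum]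
        exact Finset.sum_congr rfl fun i _ => by ring
      _ = ∑ i, n i • zEl Δfin f (Pi.single i 1) := by
        rw [Finset.sum_comm]
        refine Finset.sum_congr rfl fun i _ => ?_
        rw [zEl, Finset.smul_sum]

lemma span_range_zEl (Δfin : Finset ↥S) (f : ↥Δfin → ℂ) :
    Ideal.span (Set.range (zEl Δfin f)) =
    Ideal.span (Set.range fun i : Fin r => zEl Δfin f (Pi.single i 1)) := by
  apply le_antisymm
  · rw [Ideal.span_le]
    rintro x ⟨n, rfl⟩
    rw [zEl_linear]
    refine Ideal.sum_mem _ fun i _ => ?_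
    rw [zsmul_eq_mul]
    exact Ideal.mul_mem_left _ _ (Ideal.subset_span ⟨i, rfl⟩)
  · rw [Ideal.span_le]
    rintro x ⟨i, rfl⟩
    exact Ideal.subset_span ⟨Pi.single i 1, rfl⟩

lemma span_zEl_homogeneous (hΔ : ∀ m : ↥S, m ∈ Δfin ↔ ∑ i, (m : Fin r → ℤ) i * degd i = 1)
    (f : ↥Δfin → ℂ) :
    (Ideal.span (Set.range (zEl Δfin f))).IsHomogeneous (GA degd S) :=
  Ideal.homogeneous_span _ _ (by rintro x ⟨n, rfl⟩; exact ⟨1, zEl_mem_GA hΔ f n⟩)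

lemma mem_I_decompose (hΔ : ∀ m : ↥S, m ∈ Δfin ↔ ∑ i, (m : Fin r → ℤ) i * degd i = 1)
    (f : ↥Δfin → ℂ) {d : ℤ} {x : SGA r S}
    (hx : x ∈ Ideal.span (Set.range (zEl Δfin f))) :
    ∃ b : Fin r → SGA r S, (∀ i, b i ∈ GA degd S (d-1)) ∧
      (DirectSum.decompose (GA degd S) x d : SGA r S)
        = ∑ i, b i * zEl Δfin f (Pi.single i 1) := by
  rw [span_range_zEl] at hx
  obtain ⟨c, hc⟩ := (Ideal.mem_span_range_iff_exists_fun).1 hx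
  refine ⟨fun i => (DirectSum.decompose (GA degd S) (c i) (d-1) : SGA r S),
    fun i => SetLike.coe_mem _, ?_⟩
  rw [← hc, DirectSum.decompose_sum]
  rw [DFinsupp.finset_sum_apply]
  rw [AddSubmonoidClass.coe_finset_sum]
  refine Finset.sum_congr rfl fun i _ => ?_
  have h2 := DirectSum.coe_decompose_mul_add_of_right_mem (GA degd S)
    (a := c i) (i := d - 1) (zEl_mem_GA hΔ f (Pi.single i 1))
  rw [sub_add_cancel] at h2
  exact h2

end graded

section matrixpart
variable {r : ℕ} {S : AddSubmonoid (Fin r → ℤ)} {gens : Finset (Fin r → ℤ)}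
  {degd : Fin r → ℤ} {Δfin : Finset ↥S}

lemma dot_single (v : Fin r → ℤ) (i : Fin r) :
    (∑ j, v j * Pi.single (M := fun _ => ℤ) i 1 j) = v i := by
  rw [show (∑ j, v j * Pi.single (M := fun _ => ℤ) i 1 j)
      = ∑ j, (if j = i then v j else 0) from
    Finset.sum_congr rfl fun j _ => by rw [Pi.single_apply]; split <;> simp]
  rw [Finset.sum_ite_eq' Finset.univ i (fun j => v j)]
  simp

variable (hcone : IsConeSemigroup r S gens) (hgor : ∀ g ∈ gens, ∑ i, g i * degd i = 1)

def sliceF (d : ℤ) : Finset ↥S := (slice_finite hcone hgor d).toFinset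

lemma mem_sliceF {d : ℤ} {m : ↥S} : m ∈ sliceF hcone hgor d ↔ dgH degd S m = d :=
  Set.Finite.mem_toFinset _

lemma grade_expand {e : ℤ} {b : SGA r S} (hb : b ∈ GA degd S e) (z : SGA r S) (nn : ↥S) :
    ((b * z : SGA r S).coeff nn : ℂ) = ∑ m' ∈ sliceF hcone hgor e,
      b.coeff m' * ((z * AddMonoidAlgebra.single m' 1 : SGA r S).coeff nn : ℂ) := by
  have hsupp : b.coeff.support ⊆ sliceF hcone hgor e := by
    intro m hm
    rw [mem_sliceF]
    exact (AddMonoidAlgebra.mem_gradeBy_iff ℂ (⇑(dgH degd S)) e b).1 hb hm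
  have hb' : b = ∑ m' ∈ sliceF hcone hgor e, AddMonoidAlgebra.single m' (b.coeff m') := by
    rw [← Finset.sum_subset hsupp (fun m _ hnot => by
      rw [Finsupp.notMem_support_iff.1 hnot, AddMonoidAlgebra.single_zero])]
    exact (AddMonoidAlgebra.sum_single b).symm
  conv_lhs => rw [hb']
  rw [Finset.sum_mul, AddMonoidAlgebra.coeff_sum, Finsupp.finset_sum_apply]
  refine Finset.sum_congr rfl fun m' _ => ?_
  rw [show AddMonoidAlgebra.single m' (b.coeff m') = (b.coeff m') • AddMonoidAlgebra.single m' (1:ℂ) by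
    rw [AddMonoidAlgebra.smul_single', mul_one]]
  rw [smul_mul_assoc, mul_comm (AddMonoidAlgebra.single m' (1:ℂ)) z]
  rw [AddMonoidAlgebra.coeff_smul_apply, smul_eq_mul]

def Apoly (Δfin : Finset ↥S) (d : ℤ) :
    Matrix ↥(sliceF hcone hgor d) (Fin r × ↥(sliceF hcone hgor (d-1)))
      (MvPolynomial ↥Δfin ℂ) :=
  fun m'' q => ∑ m ∈ Δfin.attach,
    if ((m : ↥S) + ((q.2 : ↥S)) = (m'' : ↥S)) then
      MvPolynomial.X m * MvPolynomial.C ((((m : ↥S) : Fin r → ℤ) q.1 : ℂ)) else 0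

lemma Apoly_eval (f : ↥Δfin → ℂ) (d : ℤ) (m'' : ↥(sliceF hcone hgor d))
    (q : Fin r × ↥(sliceF hcone hgor (d-1))) :
    MvPolynomial.eval f (Apoly hcone hgor Δfin d m'' q)
      = ((zEl Δfin f (Pi.single q.1 1) * AddMonoidAlgebra.single ((q.2 : ↥S)) 1 : SGA r S)
          |>.coeff ((m'' : ↥S)) : ℂ) := by
  classical
  rw [Apoly, map_sum]
  unfold zEl
  rw [Finset.sum_mul, AddMonoidAlgebra.coeff_sum, Finsupp.finset_sum_apply]
  refine Finset.sum_congr rfl fun m _ => ?_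
  rw [smul_mul_assoc, AddMonoidAlgebra.single_mul_single, one_mul]
  rw [AddMonoidAlgebra.coeff_smul_apply, smul_eq_mul, AddMonoidAlgebra.coeff_single_apply]
  rw [dot_single]
  split <;> simp

lemma single_mem_iff_mulVec
    (hΔ : ∀ m : ↥S, m ∈ Δfin ↔ ∑ i, (m : Fin r → ℤ) i * degd i = 1)
    (f : ↥Δfin → ℂ) {d : ℤ} (m'' : ↥(sliceF hcone hgor (degd := degd) d)) :
    AddMonoidAlgebra.single ((m'' : ↥S)) (1:ℂ) ∈ Ideal.span (Set.range (zEl Δfin f)) ↔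
    ∃ v, ((Apoly hcone hgor Δfin d).map (MvPolynomial.eval f)).mulVec v
      = Pi.single m'' 1 := by
  classical
  constructor
  · intro hx
    have hmem : AddMonoidAlgebra.single ((m'' : ↥S)) (1:ℂ) ∈ GA degd S d :=
      single_mem_GA ((mem_sliceF hcone hgor).1 m''.2) 1
    obtain ⟨b, hb, heq⟩ := mem_I_decompose (degd := degd) hΔ f (d := d) hx
    rw [DirectSum.decompose_of_mem_same _ hmem] at heq
    refine ⟨fun q => (b q.1).coeff ((q.2 : ↥S)), ?_⟩
    funext n''
    rw [Matrix.mulVec, dotProduct]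
    calc (∑ q : Fin r × ↥(sliceF hcone hgor (d-1)),
            ((Apoly hcone hgor Δfin d).map (MvPolynomial.eval f)) n'' q * (b q.1).coeff ((q.2 : ↥S)))
        = ∑ i, ∑ m' ∈ sliceF hcone hgor (d-1),
            (b i).coeff m' * ((zEl Δfin f (Pi.single i 1) * AddMonoidAlgebra.single m' 1 : SGA r S)
              |>.coeff ((n'' : ↥S)) : ℂ) := by
          rw [Fintype.sum_prod_type]
          refine Finset.sum_congr rfl fun i _ => ?_
          rw [← Finset.sum_coe_sort (sliceF hcone hgor (d-1))
            (fun m' => (b i).coeff m' * ((zEl Δfin f (Pi.single i 1)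
              * AddMonoidAlgebra.single m' 1 : SGA r S).coeff ((n'' : ↥S)) : ℂ))]
          refine Finset.sum_congr rfl fun m' _ => ?_
          rw [Matrix.map_apply, Apoly_eval]
          ring
      _ = ∑ i, ((b i * zEl Δfin f (Pi.single i 1) : SGA r S).coeff ((n'' : ↥S)) : ℂ) := by
          refine Finset.sum_congr rfl fun i _ => (grade_expand hcone hgor (hb i) _ _).symm
      _ = ((∑ i, b i * zEl Δfin f (Pi.single i 1) : SGA r S).coeff ((n'' : ↥S)) : ℂ) := by
          rw [AddMonoidAlgebra.coeff_sum, Finsupp.finset_sum_apply]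
      _ = Pi.single (M := fun _ => ℂ) m'' 1 n'' := by
          rw [← heq, AddMonoidAlgebra.coeff_single_apply]
          by_cases h : m'' = n''
          · rw [h, Pi.single_eq_same, if_pos (show ((n'' : ↥S) = (n'' : ↥S)) from rfl)]
          · rw [Pi.single_eq_of_ne (fun hc => h hc.symm),
              if_neg (fun hc => h (Subtype.ext hc))]
  · rintro ⟨v, hv⟩
    set zz : Fin r → SGA r S := fun i => zEl Δfin f (Pi.single i 1) with hzz
    set b : Fin r → SGA r S := fun i =>
      ∑ m' : ↥(sliceF hcone hgor (d-1)), AddMonoidAlgebra.single ((m' : ↥S)) (v (i, m'))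
      with hbdef
    have hb : ∀ i, b i ∈ GA degd S (d-1) := fun i =>
      Submodule.sum_mem _ fun m' _ => single_mem_GA ((mem_sliceF hcone hgor).1 m'.2) _
    have happly : ∀ (i : Fin r) (m' : ↥(sliceF hcone hgor (d-1))),
        (b i).coeff ((m' : ↥S)) = v (i, m') := by
      intro i m'
      rw [hbdef]
      rw [AddMonoidAlgebra.coeff_sum, Finsupp.finset_sum_apply]
      rw [show (∑ m2 : ↥(sliceF hcone hgor (d-1)),
            (AddMonoidAlgebra.single ((m2 : ↥S)) (v (i, m2)) : SGA r S).coeff ((m' : ↥S)))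
          = ∑ m2 : ↥(sliceF hcone hgor (d-1)), if m2 = m' then v (i, m2) else 0 from
        Finset.sum_congr rfl fun m2 _ => by
          rw [AddMonoidAlgebra.coeff_single_apply]
          exact if_congr ⟨fun hc => Subtype.ext hc, fun hc => congrArg _ hc⟩ rfl rfl]
      rw [Finset.sum_ite_eq' Finset.univ m' (fun m2 => v (i, m2))]
      simp
    have hyG : (∑ i, b i * zz i) ∈ GA degd S d := by
      refine Submodule.sum_mem _ fun i _ => ?_
      have := SetLike.mul_mem_graded (hb i) (zEl_mem_GA hΔ f (Pi.single i 1))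
      rwa [sub_add_cancel] at this
    have hxG : AddMonoidAlgebra.single ((m'' : ↥S)) (1:ℂ) ∈ GA degd S d :=
      single_mem_GA ((mem_sliceF hcone hgor).1 m''.2) 1
    have hkey : (∑ i, b i * zz i) = AddMonoidAlgebra.single ((m'' : ↥S)) (1:ℂ) := by
      apply AddMonoidAlgebra.ext
      apply Finsupp.ext
      intro n
      by_cases hn : dgH degd S n = d
      · set n'' : ↥(sliceF hcone hgor d) := ⟨n, (mem_sliceF hcone hgor).2 hn⟩ with hn''
        have hcol := congrFun hv n''
        rw [Matrix.mulVec, dotProduct] at hcol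
        calc ((∑ i, b i * zz i : SGA r S).coeff n : ℂ)
            = ∑ i, ((b i * zz i : SGA r S).coeff n : ℂ) := by rw [AddMonoidAlgebra.coeff_sum, Finsupp.finset_sum_apply]
          _ = ∑ i, ∑ m' ∈ sliceF hcone hgor (d-1),
                (b i).coeff m' * ((zz i * AddMonoidAlgebra.single m' 1 : SGA r S).coeff n : ℂ) :=
              Finset.sum_congr rfl fun i _ => grade_expand hcone hgor (hb i) _ _
          _ = ∑ q : Fin r × ↥(sliceF hcone hgor (d-1)),
                ((Apoly hcone hgor Δfin d).map (MvPolynomial.eval f)) n'' q * v q := by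
              rw [Fintype.sum_prod_type]
              refine Finset.sum_congr rfl fun i _ => ?_
              rw [← Finset.sum_coe_sort (sliceF hcone hgor (d-1))
                (fun m' => (b i).coeff m' * ((zz i * AddMonoidAlgebra.single m' 1 : SGA r S).coeff n : ℂ))]
              refine Finset.sum_congr rfl fun m' _ => ?_
              rw [Matrix.map_apply, Apoly_eval, happly]
              ring
          _ = Pi.single (M := fun _ => ℂ) m'' 1 n'' := hcol
          _ = ((AddMonoidAlgebra.single ((m'' : ↥S)) (1:ℂ) : SGA r S).coeff n : ℂ) := by
              rw [AddMonoidAlgebra.coeff_single_apply]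
              by_cases h : m'' = n''
              · rw [h, Pi.single_eq_same, if_pos (show ((n'' : ↥S) = n) from rfl)]
              · rw [Pi.single_eq_of_ne (fun hc => h hc.symm),
                  if_neg (fun hc => h (Subtype.ext hc))]
      · have h0 : ((∑ i, b i * zz i : SGA r S).coeff n : ℂ) = 0 := by
          by_contra h
          exact hn ((AddMonoidAlgebra.mem_gradeBy_iff ℂ (⇑(dgH degd S)) d _).1 hyG
            (Finsupp.mem_support_iff.2 h))
        have h1 : ((AddMonoidAlgebra.single ((m'' : ↥S)) (1:ℂ) : SGA r S).coeff n : ℂ) = 0 := by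
          rw [AddMonoidAlgebra.coeff_single_apply, if_neg]
          intro hc
          exact hn (by rw [← hc]; exact (mem_sliceF hcone hgor).1 m''.2)
        rw [h0, h1]
    rw [← hkey]
    refine Ideal.sum_mem _ fun i _ => Ideal.mul_mem_left _ _ ?_
    exact Ideal.subset_span ⟨Pi.single i 1, rfl⟩

lemma surj_iff_allsingle
    (hΔ : ∀ m : ↥S, m ∈ Δfin ↔ ∑ i, (m : Fin r → ℤ) i * degd i = 1)
    (f : ↥Δfin → ℂ) (d : ℤ) :
    Function.Surjective ((Apoly hcone hgor Δfin d).map (MvPolynomial.eval f)).mulVecLin ↔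
    ∀ m'' : ↥S, dgH degd S m'' = d →
      AddMonoidAlgebra.single m'' (1:ℂ) ∈ Ideal.span (Set.range (zEl Δfin f)) := by
  classical
  constructor
  · intro hs m'' hm
    refine (single_mem_iff_mulVec hcone hgor hΔ f ⟨m'', (mem_sliceF hcone hgor).2 hm⟩).2 ?_
    obtain ⟨v, hv⟩ := hs (Pi.single ⟨m'', (mem_sliceF hcone hgor).2 hm⟩ 1)
    exact ⟨v, by rw [← Matrix.mulVecLin_apply, hv]⟩
  · intro hall u
    have hex : ∀ m'' : ↥(sliceF hcone hgor d), ∃ v,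
        ((Apoly hcone hgor Δfin d).map (MvPolynomial.eval f)).mulVec v = Pi.single m'' 1 :=
      fun m'' => (single_mem_iff_mulVec hcone hgor hΔ f m'').1
        (hall _ ((mem_sliceF hcone hgor).1 m''.2))
    choose V hV using hex
    refine ⟨∑ m'', u m'' • V m'', ?_⟩
    rw [map_sum]
    rw [Finset.sum_congr rfl fun m'' _ => by
      rw [LinearMap.map_smul, Matrix.mulVecLin_apply, hV m'']]
    funext k
    rw [Finset.sum_apply]
    rw [show (∑ m'' : ↥(sliceF hcone hgor d),
          (u m'' • Pi.single (M := fun _ => ℂ) m'' 1) k)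
        = ∑ m'' : ↥(sliceF hcone hgor d), (if m'' = k then u m'' else 0) from
      Finset.sum_congr rfl fun m'' _ => by
        by_cases h : m'' = k
        · subst h; simp
        · simp [h, Pi.single_eq_of_ne (Ne.symm h)]]
    rw [Finset.sum_ite_eq' Finset.univ k u]
    simp

end matrixpart

/-- Non-degenerate coefficient functions form a Zariski open subset of
the affine space `ℂ^Δ` of all coefficient functions `f : Δ → ℂ`: there is a collection
`P` of polynomials on `ℂ^Δ` such that `f` is non-degenerate (i.e.
`dim_ℂ ℂ[K]/(z_n : n ∈ N) < ∞`) if and only if some `p ∈ P` satisfies `p(f) ≠ 0`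
(so the non-degenerate locus is the complement of the common zero set of `P`). -/
theorem nondegenerate_is_zariski_open
    (r : ℕ) (S : AddSubmonoid (Fin r → ℤ))
    (gens : Finset (Fin r → ℤ)) (hcone : IsConeSemigroup r S gens)
    (degd : Fin r → ℤ) (hgor : ∀ g ∈ gens, ∑ i, g i * degd i = 1)
    (Δfin : Finset ↥S)
    (hΔ : ∀ m : ↥S, m ∈ Δfin ↔ ∑ i, (m : Fin r → ℤ) i * degd i = 1) :
    ∃ P : Set (MvPolynomial ↥Δfin ℂ), ∀ f : ↥Δfin → ℂ,
      FiniteDimensional ℂ (SGA r S ⧸ Ideal.span (Set.range (zEl Δfin f))) ↔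
      ∃ p ∈ P, MvPolynomial.eval f p ≠ 0 := by
  classical
  have master : ∀ f : ↥Δfin → ℂ,
      FiniteDimensional ℂ (SGA r S ⧸ Ideal.span (Set.range (zEl Δfin f))) ↔
      ∃ d : ℤ, (gens.card : ℤ) < d ∧
        Function.Surjective ((Apoly hcone hgor Δfin d).map (MvPolynomial.eval f)).mulVecLin := by
    intro f
    set I : Ideal (SGA r S) := Ideal.span (Set.range (zEl Δfin f)) with hIdef
    constructor
    · intro hfd
      by_contra hno
      push_neg at hno
      have hbad : ∀ d : ℤ, (gens.card : ℤ) < d → ∃ m'' : ↥S, dgH degd S m'' = d ∧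
          AddMonoidAlgebra.single m'' (1:ℂ) ∉ I := by
        intro d hd
        have h1 := hno d hd
        rw [surj_iff_allsingle hcone hgor hΔ f d] at h1
        push_neg at h1
        exact h1
      set n := Module.finrank ℂ (SGA r S ⧸ I) with hn
      have hsel : ∀ k : Fin (n+1), ∃ m'' : ↥S,
          dgH degd S m'' = ((gens.card : ℤ) + 1 + (k : ℤ)) ∧
          AddMonoidAlgebra.single m'' (1:ℂ) ∉ I := by
        intro k
        refine hbad _ ?_
        have : (0:ℤ) ≤ (k : ℤ) := Int.natCast_nonneg _
        omega
      choose ms hdeg hnot using hsel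
      have hnotli : ¬ LinearIndependent ℂ
          (fun k : Fin (n+1) => Ideal.Quotient.mk I (AddMonoidAlgebra.single (ms k) (1:ℂ))) := by
        intro hli
        have hcard := hli.fintype_card_le_finrank
        rw [Fintype.card_fin] at hcard
        omega
      rw [Fintype.not_linearIndependent_iff] at hnotli
      obtain ⟨g, hgsum, k₀, hk₀⟩ := hnotli
      have hxI : (∑ k, AddMonoidAlgebra.single (ms k) (g k) : SGA r S) ∈ I := by
        rw [← Ideal.Quotient.eq_zero_iff_mem]
        have hmk : Ideal.Quotient.mk I (∑ k, AddMonoidAlgebra.single (ms k) (g k))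
            = ∑ k, g k • Ideal.Quotient.mk I (AddMonoidAlgebra.single (ms k) (1:ℂ)) := by
          rw [map_sum]
          refine Finset.sum_congr rfl fun k _ => ?_
          rw [show AddMonoidAlgebra.single (ms k) (g k)
              = g k • AddMonoidAlgebra.single (ms k) (1:ℂ) by
            rw [AddMonoidAlgebra.smul_single', mul_one]]
          rw [← Ideal.Quotient.mkₐ_eq_mk ℂ, _root_.map_smul]
        rw [hmk, hgsum]
      have hdec := span_zEl_homogeneous (degd := degd) hΔ f
        ((gens.card : ℤ) + 1 + (k₀ : ℤ)) hxI
      have hval : (DirectSum.decompose (GA degd S)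
          (∑ k, AddMonoidAlgebra.single (ms k) (g k) : SGA r S)
          ((gens.card : ℤ) + 1 + (k₀ : ℤ)) : SGA r S)
          = AddMonoidAlgebra.single (ms k₀) (g k₀) := by
        rw [DirectSum.decompose_sum, DFinsupp.finset_sum_apply,
          AddSubmonoidClass.coe_finset_sum]
        rw [Finset.sum_congr rfl (fun k _ => show
            (DirectSum.decompose (GA degd S) (AddMonoidAlgebra.single (ms k) (g k))
              ((gens.card : ℤ) + 1 + (k₀ : ℤ)) : SGA r S)
            = if k = k₀ then AddMonoidAlgebra.single (ms k₀) (g k₀) else 0 from by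
          by_cases hk : k = k₀
          · subst hk
            rw [if_pos rfl]
            exact DirectSum.decompose_of_mem_same _ (single_mem_GA (hdeg k) (g k))
          · rw [if_neg hk]
            refine DirectSum.decompose_of_mem_ne _ (single_mem_GA (hdeg k) (g k)) ?_
            intro hc
            apply hk
            have hkk : ((k : ℤ)) = ((k₀ : ℤ)) := by omega
            have : (k : ℕ) = (k₀ : ℕ) := by exact_mod_cast hkk
            exact Fin.ext this)]
        rw [Finset.sum_ite_eq' Finset.univ k₀
          (fun _ => (AddMonoidAlgebra.single (ms k₀) (g k₀) : SGA r S))]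
        simp
      rw [hval] at hdec
      apply hnot k₀
      have : AddMonoidAlgebra.single (ms k₀) (1:ℂ)
          = (g k₀)⁻¹ • AddMonoidAlgebra.single (ms k₀) (g k₀) := by
        rw [AddMonoidAlgebra.smul_single', inv_mul_cancel₀ hk₀]
      rw [this]
      exact Submodule.smul_of_tower_mem I _ hdec
    · rintro ⟨d, hd, hsurj⟩
      have hcond := (surj_iff_allsingle hcone hgor hΔ f d).1 hsurj
      have hstep : ∀ e : ℤ, d ≤ e → ∀ m : ↥S, dgH degd S m = e →
          AddMonoidAlgebra.single m (1:ℂ) ∈ I := by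
        refine fun e he => Int.le_induction (m := d)
          (motive := fun e _ => ∀ m : ↥S, dgH degd S m = e → AddMonoidAlgebra.single m (1:ℂ) ∈ I)
          hcond ?_ e he
        intro e he ih m hm
        have hsplit := exists_split hcone hgor (m := m) (by omega)
        obtain ⟨gm, m', hgm, hmm⟩ := hsplit
        have hdg : dgH degd S gm = 1 := hgor _ hgm
        have hdm' : dgH degd S m' = e := by
          have := map_add (dgH degd S) gm m'
          rw [← hmm, hm, hdg] at this
          omega
        have hmul : AddMonoidAlgebra.single m (1:ℂ)
            = AddMonoidAlgebra.single gm (1:ℂ) * AddMonoidAlgebra.single m' (1:ℂ) := by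
          rw [AddMonoidAlgebra.single_mul_single, one_mul, ← hmm]
        rw [hmul]
        exact Ideal.mul_mem_left _ _ (ih m' hdm')
      set Tfin : Finset ↥S := (Finset.Icc (0:ℤ) (d-1)).biUnion
        (fun e => sliceF hcone hgor e) with hTfin
      have hspan : ⊤ ≤ Submodule.span ℂ
          ((fun m : ↥S => Ideal.Quotient.mk I (AddMonoidAlgebra.single m (1:ℂ))) '' ↑Tfin) := by
        intro x _
        obtain ⟨y, rfl⟩ := Ideal.Quotient.mk_surjective x
        have hy : y = ∑ m ∈ y.coeff.support, AddMonoidAlgebra.single m (y.coeff m) :=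
          (AddMonoidAlgebra.sum_single y).symm
        rw [hy, map_sum]
        refine Submodule.sum_mem _ fun m _ => ?_
        rw [show AddMonoidAlgebra.single m (y.coeff m)
            = y.coeff m • AddMonoidAlgebra.single m (1:ℂ) by
          rw [AddMonoidAlgebra.smul_single', mul_one]]
        rw [← Ideal.Quotient.mkₐ_eq_mk ℂ, _root_.map_smul, Ideal.Quotient.mkₐ_eq_mk ℂ]
        by_cases hdm : dgH degd S m ≤ d - 1
        · refine Submodule.smul_mem _ _ (Submodule.subset_span ?_)
          refine ⟨m, ?_, rfl⟩
          rw [Finset.coe_biUnion]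
          refine Set.mem_biUnion (Finset.mem_coe.2 ?_) ((mem_sliceF hcone hgor).2 rfl)
          rw [Finset.mem_Icc]
          exact ⟨deg_nonneg hcone hgor m, hdm⟩
        · have : AddMonoidAlgebra.single m (1:ℂ) ∈ I :=
            hstep (dgH degd S m) (by omega) m rfl
          rw [Ideal.Quotient.eq_zero_iff_mem.2 this, smul_zero]
          exact Submodule.zero_mem _
      have : Module.Finite ℂ (SGA r S ⧸ I) := by
        refine ⟨Submodule.fg_def.2 ⟨_, ?_, le_antisymm le_top hspan⟩⟩
        exact Set.Finite.image _ (Tfin.finite_toSet)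
      exact this
  refine ⟨{p | ∀ f : ↥Δfin → ℂ, MvPolynomial.eval f p ≠ 0 →
      FiniteDimensional ℂ (SGA r S ⧸ Ideal.span (Set.range (zEl Δfin f)))},
    fun f => ⟨?_, ?_⟩⟩
  · intro hfd
    obtain ⟨d, hd, hsurj⟩ := (master f).1 hfd
    obtain ⟨sel, hsel⟩ := (surj_iff_det _).1 hsurj
    have hdeteq : ∀ f' : ↥Δfin → ℂ,
        MvPolynomial.eval f' (((Apoly hcone hgor Δfin d).submatrix id sel).det)
        = (((Apoly hcone hgor Δfin d).map (MvPolynomial.eval f')).submatrix id sel).det := by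
      intro f'
      rw [RingHom.map_det]
      congr 1
    refine ⟨((Apoly hcone hgor Δfin d).submatrix id sel).det, ?_, ?_⟩
    · intro f' hne
      refine (master f').2 ⟨d, hd, (surj_iff_det _).2 ⟨sel, ?_⟩⟩
      rwa [hdeteq f'] at hne
    · rw [hdeteq f]
      exact hsel
  · rintro ⟨p, hp, hne⟩
    exact hp f hne

end
end

section
/- For every non-degenerate coefficient function f and every n₀ ∈ N, the cohomology W(f; n₀) of the Koszul complex associated to the graded pieces z_{i,j} of the elements z_i with respect to the ·n₀ grading is finite-dimensional over ℂ. -/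
noncomputable section

/-- `I(n₀) = { m · n₀ : m ∈ Δ }`, the (finite) set of values of the auxiliary grading
`· n₀` on `Δ`. -/
def Igrades {r : ℕ} {S : AddSubmonoid (Fin r → ℤ)} (Δfin : Finset ↥S)
    (n₀ : Fin r → ℤ) : Finset ℤ :=
  Δfin.image fun m => ∑ i, m.val i * n₀ i

/-- The graded piece `z_{i,j}`, for `i ∈ {1,…,r}` and `j ∈ I(n₀)`: the `·n₀`-degree-`j`
component of `z_i = Σ_{m∈Δ} f(m)(m·n_i)[m]`, namely
`z_{i,j} = Σ_{m∈Δ, m·n₀ = j} f(m)(m·n_i)[m]`. -/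
def zGraded {r : ℕ} {S : AddSubmonoid (Fin r → ℤ)} (Δfin : Finset ↥S)
    (f : ↥Δfin → ℂ) (n₀ : Fin r → ℤ)
    (e : Fin r × ↥(Igrades Δfin n₀)) : SGA r S :=
  ∑ m ∈ Δfin.attach.filter
      (fun m => (∑ k, m.val.val k * n₀ k) = ((e.2 : ℤ))),
    (f m * ((m.val.val e.1 : ℤ) : ℂ)) •
      AddMonoidAlgebra.single ((m : ↥S)) (1 : ℂ)

/-- The (total) Koszul differential for a finite family `z : ι → A` of elements of a
commutative ring `A`, on the model `Λ(⊕_ι ℂ e_i) ⊗ A ≅ (Finset ι → A)` of the Koszul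
complex `Λ(⊕_i ⊕_{j∈I(n₀)} ℂ e_{i,j}) ⊗ ℂ[K]`, with signs determined by an injective
encoding `enc : ι → ℤ` of a linear order on `ι`:
`(d x)(s) = Σ_{e ∉ s} (−1)^{#{e' ∈ s : e' < e}} z_e · x(s ∪ {e})`. -/
def koszulD {A : Type*} [CommRing A] [Algebra ℂ A] {ι : Type*} [Fintype ι]
    [DecidableEq ι] (z : ι → A) (enc : ι → ℤ) :
    (Finset ι → A) →ₗ[ℂ] (Finset ι → A) where
  toFun x := fun s => ∑ e ∈ Finset.univ \ s,
    ((-1 : A) ^ ((s.filter (fun e' => enc e' < enc e)).card)) * (z e * x (insert e s))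
  map_add' x y := by
    funext s
    simp [mul_add, Finset.sum_add_distrib]
  map_smul' c x := by
    funext s
    simp [Finset.smul_sum, mul_smul_comm, smul_sub]

/-- The cohomology of an operator `D` (with `D ∘ D = 0`) on a module `V`:
`ker D / (im D ∩ ker D)`. -/
abbrev opCohomology {V : Type*} [AddCommGroup V] [Module ℂ V] (D : V →ₗ[ℂ] V) : Type _ :=
  ↥(LinearMap.ker D) ⧸
    Submodule.comap (LinearMap.ker D).subtype (LinearMap.range D)

/-- `W(f; n₀)`: the cohomology of the Koszul complex
`Λ(⊕_i ⊕_{j∈I(n₀)} ℂ e_{i,j}) ⊗ ℂ[K]` with differential `d = Σ_{i,j} ι(e_{i,j}) z_{i,j}`. -/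
abbrev Wcoh {r : ℕ} {S : AddSubmonoid (Fin r → ℤ)} (Δfin : Finset ↥S)
    (f : ↥Δfin → ℂ) (n₀ : Fin r → ℤ) : Type _ :=
  opCohomology (koszulD (zGraded Δfin f n₀)
    (fun e : Fin r × ↥(Igrades Δfin n₀) => (e.2 : ℤ) * r + (e.1 : ℤ)))

-- === Auxiliary lemmas ===

open Finset in
theorem gordan_aux {r : ℕ} {S : AddSubmonoid (Fin r → ℤ)} {gens : Finset (Fin r → ℤ)}
    (hcone : IsConeSemigroup r S gens) : AddMonoid.FG ↥S := by
  classical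
  set B : Fin r → ℤ := fun i => ∑ g ∈ gens, |g i| with hB
  set box : Finset (Fin r → ℤ) := Finset.Icc (fun i => -B i) B with hbox
  set G : Finset (Fin r → ℤ) := box.filter (fun m => m ∈ S) with hG
  have hgensS : ∀ g ∈ gens, g ∈ S := by
    intro g hg
    rw [hcone]
    refine ⟨fun h => if h = g then 1 else 0, fun h _ => by positivity, fun i => ?_⟩
    rw [Finset.sum_eq_single g]
    · simp
    · intro h hh hne; simp [hne]
    · intro h; exact absurd hg h
  have hgensbox : ∀ g ∈ gens, g ∈ box := by
    intro g hg
    rw [hbox, Finset.mem_Icc]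
    have habs : ∀ i, |g i| ≤ B i :=
      fun i => Finset.single_le_sum (f := fun h => |h i|) (fun h _ => abs_nonneg _) hg
    constructor <;> intro i <;> have := abs_le.mp (habs i)
    · simpa using this.1
    · exact this.2
  have hboxmem : ∀ (m : Fin r → ℤ) (c : (Fin r → ℤ) → ℚ), (∀ g ∈ gens, 0 ≤ c g) →
      (∀ i, (m i : ℚ) = ∑ g ∈ gens, c g * (g i : ℚ)) → (∀ g ∈ gens, c g < 1) → m ∈ box := by
    intro m c hc hm hlt
    rw [hbox, Finset.mem_Icc]
    have habs : ∀ i, |m i| ≤ B i := by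
      intro i
      have h1 : |(m i : ℚ)| ≤ ((B i : ℤ) : ℚ) := by
        rw [hm i]
        calc |∑ g ∈ gens, c g * (g i : ℚ)| ≤ ∑ g ∈ gens, |c g * (g i : ℚ)| :=
              Finset.abs_sum_le_sum_abs _ _
          _ ≤ ∑ g ∈ gens, |(g i : ℚ)| := by
              apply Finset.sum_le_sum
              intro g hg
              rw [abs_mul]
              have h0 : |c g| ≤ 1 := by
                rw [abs_le]; exact ⟨by linarith [hc g hg], le_of_lt (hlt g hg)⟩
              nlinarith [abs_nonneg ((g i : ℚ))]
          _ = ((B i : ℤ) : ℚ) := by rw [hB]; push_cast; ring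
      rw [← Int.cast_abs] at h1
      exact_mod_cast h1
    constructor <;> intro i <;> have := abs_le.mp (habs i)
    · simpa using this.1
    · exact this.2
  have key : ∀ N : ℕ, ∀ m : Fin r → ℤ, ∀ c : (Fin r → ℤ) → ℚ,
      (∀ g ∈ gens, 0 ≤ c g) → (∀ i, (m i : ℚ) = ∑ g ∈ gens, c g * (g i : ℚ)) →
      (∑ g ∈ gens, ⌊c g⌋) ≤ (N : ℤ) → m ∈ AddSubmonoid.closure (↑G : Set (Fin r → ℤ)) := by
    intro N
    induction N with
    | zero =>
      intro m c hc hm hsum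
      have hlt : ∀ g ∈ gens, c g < 1 := by
        intro g hg
        by_contra h
        push_neg at h
        have h1 : (1 : ℤ) ≤ ⌊c g⌋ := by exact_mod_cast Int.le_floor.mpr (by exact_mod_cast h)
        have h2 : (1:ℤ) ≤ ∑ g ∈ gens, ⌊c g⌋ := le_trans h1
          (Finset.single_le_sum (f := fun g => ⌊c g⌋)
            (fun g hg => Int.le_floor.mpr (by simpa using hc g hg)) hg)
        omega
      exact AddSubmonoid.subset_closure (Finset.mem_coe.mpr
        (Finset.mem_filter.mpr ⟨hboxmem m c hc hm hlt, (hcone m).mpr ⟨c, hc, hm⟩⟩))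
    | succ N ih =>
      intro m c hc hm hsum
      by_cases hex : ∃ g₀ ∈ gens, 1 ≤ c g₀
      · obtain ⟨g₀, hg₀, hge1⟩ := hex
        set c' : (Fin r → ℤ) → ℚ := Function.update c g₀ (c g₀ - 1) with hc'
        have hcg : ∀ g ∈ gens \ {g₀}, c' g = c g := by
          intro g hg
          rw [Finset.mem_sdiff, Finset.mem_singleton] at hg
          rw [hc', Function.update_of_ne hg.2]
        have hcg0 : c' g₀ = c g₀ - 1 := by rw [hc', Function.update_self]
        have hc'nonneg : ∀ g ∈ gens, 0 ≤ c' g := by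
          intro g hg
          rcases eq_or_ne g g₀ with h | h
          · rw [h, hcg0]; linarith
          · rw [hc', Function.update_of_ne h]; exact hc g hg
        have hsum' : ∀ i, ((m - g₀) i : ℚ) = ∑ g ∈ gens, c' g * (g i : ℚ) := by
          intro i
          rw [Finset.sum_eq_sum_sdiff_singleton_add hg₀ (fun g => c' g * (g i : ℚ)),
            Finset.sum_congr rfl (fun g hg => by rw [hcg g hg])]
          have := hm i
          rw [Finset.sum_eq_sum_sdiff_singleton_add hg₀ (fun g => c g * (g i : ℚ))] at this
          rw [hcg0]
          simp only [Pi.sub_apply]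
          push_cast
          linarith
        have hfloor' : ∑ g ∈ gens, ⌊c' g⌋ ≤ (N : ℤ) := by
          rw [Finset.sum_eq_sum_sdiff_singleton_add hg₀ (fun g => ⌊c' g⌋),
            Finset.sum_congr rfl (fun g hg => by rw [hcg g hg])]
          rw [Finset.sum_eq_sum_sdiff_singleton_add hg₀ (fun g => ⌊c g⌋)] at hsum
          have hfl : ⌊c' g₀⌋ = ⌊c g₀⌋ - 1 := by
            rw [hcg0]; exact_mod_cast Int.floor_sub_intCast (c g₀) 1
          push_cast at hsum ⊢
          omega
        have hmem : m - g₀ ∈ AddSubmonoid.closure (↑G : Set (Fin r → ℤ)) :=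
          ih (m - g₀) c' hc'nonneg hsum' hfloor'
        have hmeq : m = (m - g₀) + g₀ := by ring
        rw [hmeq]
        exact AddSubmonoid.add_mem _ hmem (AddSubmonoid.subset_closure (Finset.mem_coe.mpr
          (Finset.mem_filter.mpr ⟨hgensbox g₀ hg₀, hgensS g₀ hg₀⟩)))
      · push_neg at hex
        exact AddSubmonoid.subset_closure (Finset.mem_coe.mpr
          (Finset.mem_filter.mpr ⟨hboxmem m c hc hm hex, (hcone m).mpr ⟨c, hc, hm⟩⟩))
  have hSG : S = AddSubmonoid.closure (↑G : Set (Fin r → ℤ)) := by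
    apply le_antisymm
    · intro m hm
      obtain ⟨c, hc, hmc⟩ := (hcone m).mp hm
      refine key (∑ g ∈ gens, ⌊c g⌋).toNat m c hc hmc ?_
      exact Int.self_le_toNat _
    · rw [AddSubmonoid.closure_le]
      intro m hm
      rw [Finset.mem_coe, hG, Finset.mem_filter] at hm
      exact hm.2
  exact (AddMonoid.fg_iff_addSubmonoid_fg S).mpr ⟨G, hSG.symm⟩

section KoszulAux

variable {A : Type*} [CommRing A] [Algebra ℂ A] {ι : Type*} [Fintype ι] [DecidableEq ι]

theorem koszulD_apply (z : ι → A) (enc : ι → ℤ) (x : Finset ι → A) (s : Finset ι) :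
    koszulD z enc x s = ∑ e ∈ Finset.univ \ s,
      ((-1 : A) ^ ((s.filter (fun e' => enc e' < enc e)).card)) * (z e * x (insert e s)) := rfl

/-- `koszulD` is `A`-linear. -/
theorem koszulD_smul (z : ι → A) (enc : ι → ℤ) (a : A) (x : Finset ι → A) :
    koszulD z enc (a • x) = a • koszulD z enc x := by
  funext s
  simp only [koszulD_apply, Pi.smul_apply, smul_eq_mul, Finset.mul_sum]
  apply Finset.sum_congr rfl
  intro e _
  ring

omit [Fintype ι] in
theorem filter_card_insert (enc : ι → ℤ) (t : Finset ι) (v w : ι) (hv : v ∉ t) :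
    ((insert v t).filter (fun a => enc a < enc w)).card =
      (t.filter (fun a => enc a < enc w)).card + (if enc v < enc w then 1 else 0) := by
  rw [Finset.filter_insert]
  split
  · rw [Finset.card_insert_of_notMem (fun h => hv (Finset.mem_of_mem_filter v h))]
  · simp

/-- Koszul contraction: if `x` is a cocycle then `z e • x` is a coboundary. -/
theorem koszul_contraction (z : ι → A) (enc : ι → ℤ) (hinj : Function.Injective enc)
    (e : ι) (x : Finset ι → A) (hx : koszulD z enc x = 0) :
    ∃ y : Finset ι → A, koszulD z enc y = z e • x := by
  classical
  refine ⟨fun s => if e ∈ s then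
    ((-1 : A) ^ ((s.filter (fun a => enc a < enc e)).card)) * x (s.erase e) else 0, ?_⟩
  funext s
  by_cases hes : e ∈ s
  · have he's : e ∉ s.erase e := Finset.notMem_erase e s
    have hxs : koszulD z enc x (s.erase e) = 0 := by rw [hx]; rfl
    rw [koszulD_apply] at hxs
    have hsplit : Finset.univ \ (s.erase e) = insert e (Finset.univ \ s) := by
      ext u
      simp only [Finset.mem_sdiff, Finset.mem_univ, true_and, Finset.mem_insert,
        Finset.mem_erase]
      by_cases hu : u = e <;> simp [hu, hes]
    have henotin : e ∉ Finset.univ \ s := by simp [hes]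
    rw [hsplit, Finset.sum_insert henotin, Finset.insert_erase hes] at hxs
    have hFe : (((s.erase e).filter (fun a => enc a < enc e)).card)
        = ((s.filter (fun a => enc a < enc e)).card) := by
      conv_rhs => rw [← Finset.insert_erase hes]
      rw [filter_card_insert enc (s.erase e) e e he's]
      simp
    rw [hFe] at hxs
    rw [koszulD_apply]
    have hterm : ∀ u ∈ Finset.univ \ s,
        ((-1 : A) ^ ((s.filter (fun a => enc a < enc u)).card)) * (z u * (if e ∈ insert u s then
            ((-1 : A) ^ (((insert u s).filter (fun a => enc a < enc e)).card))
              * x ((insert u s).erase e) else 0)) =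
        (-((-1 : A) ^ ((s.filter (fun a => enc a < enc e)).card))) *
          (((-1 : A) ^ (((s.erase e).filter (fun a => enc a < enc u)).card)) *
            (z u * x (insert u (s.erase e)))) := by
      intro u hu
      have hus : u ∉ s := by simpa using hu
      have hune : u ≠ e := fun h => hus (h ▸ hes)
      have hein : e ∈ insert u s := Finset.mem_insert_of_mem hes
      rw [if_pos hein, Finset.erase_insert_of_ne hune]
      have h1 : (((insert u s).filter (fun a => enc a < enc e)).card)
          = ((s.filter (fun a => enc a < enc e)).card) + (if enc u < enc e then 1 else 0) :=
        filter_card_insert enc s u e hus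
      have h2 : ((s.filter (fun a => enc a < enc u)).card)
          = (((s.erase e).filter (fun a => enc a < enc u)).card)
          + (if enc e < enc u then 1 else 0) := by
        conv_lhs => rw [← Finset.insert_erase hes]
        exact filter_card_insert enc (s.erase e) e u he's
      have hne : enc u ≠ enc e := fun h => hune (hinj h)
      rcases lt_or_gt_of_ne hne with h | h
      · rw [h1, h2, if_pos h, if_neg (lt_asymm h)]
        simp only [pow_add, pow_zero, pow_one, add_zero]
        ring
      · rw [h1, h2, if_neg (lt_asymm h), if_pos h]
        simp only [pow_add, pow_zero, pow_one, add_zero]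
        ring
    rw [Finset.sum_congr rfl hterm, ← Finset.mul_sum]
    have hs2 : ∑ u ∈ Finset.univ \ s,
        ((-1 : A) ^ (((s.erase e).filter (fun a => enc a < enc u)).card)) *
          (z u * x (insert u (s.erase e)))
        = -(((-1 : A) ^ ((s.filter (fun a => enc a < enc e)).card)) * (z e * x s)) := by
      linear_combination hxs
    rw [hs2]
    have hsq : ((-1 : A) ^ ((s.filter (fun a => enc a < enc e)).card)) *
        ((-1 : A) ^ ((s.filter (fun a => enc a < enc e)).card)) = 1 := by
      rw [← pow_add]
      exact Even.neg_one_pow ⟨(s.filter (fun a => enc a < enc e)).card, rfl⟩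
    show _ = z e * x s
    calc (-((-1 : A) ^ ((s.filter (fun a => enc a < enc e)).card))) *
          (-(((-1 : A) ^ ((s.filter (fun a => enc a < enc e)).card)) * (z e * x s)))
        = (((-1 : A) ^ ((s.filter (fun a => enc a < enc e)).card)) *
            ((-1 : A) ^ ((s.filter (fun a => enc a < enc e)).card))) * (z e * x s) := by ring
      _ = z e * x s := by rw [hsq]; ring
  · rw [koszulD_apply]
    have hein : e ∈ Finset.univ \ s := by simp [hes]
    rw [Finset.sum_eq_single_of_mem e hein]
    · rw [if_pos (Finset.mem_insert_self e s), Finset.erase_insert hes]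
      have hFe : (((insert e s).filter (fun a => enc a < enc e)).card)
          = ((s.filter (fun a => enc a < enc e)).card) := by
        rw [filter_card_insert enc s e e hes]
        simp
      rw [hFe]
      have hsq : ((-1 : A) ^ ((s.filter (fun a => enc a < enc e)).card)) *
          ((-1 : A) ^ ((s.filter (fun a => enc a < enc e)).card)) = 1 := by
        rw [← pow_add]
        exact Even.neg_one_pow ⟨(s.filter (fun a => enc a < enc e)).card, rfl⟩
      show _ = z e * x s
      calc ((-1:A) ^ ((s.filter (fun a => enc a < enc e)).card)) *
            (z e * (((-1:A) ^ ((s.filter (fun a => enc a < enc e)).card)) * x s))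
          = (((-1:A) ^ ((s.filter (fun a => enc a < enc e)).card)) *
              ((-1:A) ^ ((s.filter (fun a => enc a < enc e)).card))) * (z e * x s) := by ring
        _ = z e * x s := by rw [hsq]; ring
    · intro u _ hune
      have : e ∉ insert u s := by
        simp only [Finset.mem_insert]
        rintro (h | h)
        · exact hune h.symm
        · exact hes h
      rw [if_neg this, mul_zero, mul_zero]

end KoszulAux

theorem zGraded_sum {r : ℕ} {S : AddSubmonoid (Fin r → ℤ)} (Δfin : Finset ↥S)
    (f : ↥Δfin → ℂ) (n₀ : Fin r → ℤ) (i : Fin r) :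
    ∑ j ∈ (Igrades Δfin n₀).attach, zGraded Δfin f n₀ (i, j)
      = ∑ m ∈ Δfin.attach,
          (f m * ((m.val.val i : ℤ) : ℂ)) • AddMonoidAlgebra.single (m.val) (1 : ℂ) := by
  classical
  have hgr : ∀ m : ↥Δfin, (∑ k, m.val.val k * n₀ k) ∈ Igrades Δfin n₀ := by
    intro m; rw [Igrades]; exact Finset.mem_image_of_mem _ m.2
  have hmaps : ∀ m ∈ Δfin.attach,
      (⟨∑ k, m.val.val k * n₀ k, hgr m⟩ : ↥(Igrades Δfin n₀))
        ∈ (Igrades Δfin n₀).attach := fun m _ => Finset.mem_attach _ _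
  calc ∑ j ∈ (Igrades Δfin n₀).attach, zGraded Δfin f n₀ (i, j)
      = ∑ j ∈ (Igrades Δfin n₀).attach, ∑ m ∈ Δfin.attach.filter
          (fun m => (⟨∑ k, m.val.val k * n₀ k, hgr m⟩
            : ↥(Igrades Δfin n₀)) = j),
          (f m * ((m.val.val i : ℤ) : ℂ)) • AddMonoidAlgebra.single (m.val) (1 : ℂ) := by
        apply Finset.sum_congr rfl
        intro j _
        rw [zGraded]
        apply Finset.sum_congr
        · apply Finset.filter_congr
          intro m _
          simp [Subtype.ext_iff]
        · intros; rfl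
    _ = _ := Finset.sum_fiberwise_of_maps_to hmaps _

theorem zEl_mem_span {r : ℕ} {S : AddSubmonoid (Fin r → ℤ)} (Δfin : Finset ↥S)
    (f : ↥Δfin → ℂ) (n₀ : Fin r → ℤ) (n : Fin r → ℤ) :
    zEl Δfin f n ∈ Ideal.span (Set.range (zGraded Δfin f n₀)) := by
  classical
  have hdecomp : zEl Δfin f n = ∑ i : Fin r, ((n i : ℂ)) •
      ∑ j ∈ (Igrades Δfin n₀).attach, zGraded Δfin f n₀ (i, j) := by
    rw [zEl]
    have hR : ∀ i : Fin r, ((n i : ℂ)) • ∑ j ∈ (Igrades Δfin n₀).attach, zGraded Δfin f n₀ (i, j)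
        = ∑ m ∈ Δfin.attach, (n i : ℂ) •
            ((f m * ((m.val.val i : ℤ) : ℂ)) • AddMonoidAlgebra.single (m.val) (1 : ℂ)) := by
      intro i
      rw [zGraded_sum Δfin f n₀ i, Finset.smul_sum]
    rw [Finset.sum_congr rfl (fun i _ => hR i), Finset.sum_comm]
    apply Finset.sum_congr rfl
    intro m _
    simp only [smul_smul]
    rw [← Finset.sum_smul]
    congr 1
    push_cast
    rw [Finset.mul_sum]
    apply Finset.sum_congr rfl
    intro i _
    ring
  rw [hdecomp]
  apply Submodule.sum_mem
  intro i _
  apply Submodule.smul_of_tower_mem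
  apply Submodule.sum_mem
  intro j _
  exact Ideal.subset_span ⟨(i, j), rfl⟩

/-- Generic finiteness statement for Koszul cohomology over a Noetherian ℂ-algebra:
if the ideal generated by the family `z` contains an ideal `I₀` with finite-dimensional
quotient, then the total Koszul cohomology of `z` is finite-dimensional. -/
theorem koszul_cohomology_finiteDimensional {A : Type} [CommRing A] [Algebra ℂ A]
    [IsNoetherianRing A] {ι : Type} [Fintype ι] [DecidableEq ι]
    (z : ι → A) (enc : ι → ℤ) (hinj : Function.Injective enc)
    (I₀ : Ideal A) (hfin : FiniteDimensional ℂ (A ⧸ I₀))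
    (hIJ : I₀ ≤ Ideal.span (Set.range z)) :
    FiniteDimensional ℂ (opCohomology (koszulD z enc)) := by
  classical
  -- the Koszul differential as an `A`-linear map
  let Dl := koszulD z enc
  let D' : (Finset ι → A) →ₗ[A] (Finset ι → A) :=
    { toFun := Dl
      map_add' := Dl.map_add
      map_smul' := fun a x => koszulD_smul z enc a x }
  -- the kernel is a finitely generated A-module
  obtain ⟨T, hT⟩ := IsNoetherian.noetherian (LinearMap.ker D')
  -- J • (ker D') ⊆ range D'
  have hJK : ∀ j ∈ Ideal.span (Set.range z), ∀ v ∈ LinearMap.ker D',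
      j • v ∈ LinearMap.range D' := by
    intro j hj
    induction hj using Submodule.span_induction with
    | mem x hx =>
      obtain ⟨e, rfl⟩ := hx
      intro v hv
      have hv0 : Dl v = 0 := hv
      obtain ⟨y, hy⟩ := koszul_contraction z enc hinj e v hv0
      exact ⟨y, hy⟩
    | zero => intro v _; rw [zero_smul]; exact Submodule.zero_mem _
    | add x y hx hy ihx ihy =>
      intro v hv
      rw [add_smul]
      exact Submodule.add_mem _ (ihx v hv) (ihy v hv)
    | smul a x hx ihx =>
      intro v hv
      rw [smul_eq_mul, mul_smul]
      exact Submodule.smul_mem _ _ (ihx v hv)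
  -- a finite ℂ-spanning set of A modulo I₀
  obtain ⟨TQ, hTQ⟩ := Module.finite_def.mp hfin
  choose out hout using Submodule.Quotient.mk_surjective I₀
  let mkl : A →ₗ[ℂ] (A ⧸ I₀) := (I₀.mkQ).restrictScalars ℂ
  have hmkl_apply : ∀ a : A, mkl a = (Submodule.Quotient.mk a : A ⧸ I₀) := fun _ => rfl
  have hrep : ∀ a : A, ∃ c : (A ⧸ I₀) → ℂ, a - ∑ q ∈ TQ, c q • out q ∈ I₀ := by
    intro a
    have hmem : (Submodule.Quotient.mk a : A ⧸ I₀) ∈ Submodule.span ℂ (↑TQ : Set (A ⧸ I₀)) := by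
      rw [hTQ]; exact Submodule.mem_top
    obtain ⟨c, -, hc⟩ := Submodule.mem_span_finset.mp hmem
    refine ⟨c, ?_⟩
    rw [← Submodule.Quotient.mk_eq_zero I₀, ← hmkl_apply, map_sub, map_sum, hmkl_apply]
    have he : ∀ q ∈ TQ, mkl (c q • out q) = c q • q := by
      intro q _
      rw [map_smul, hmkl_apply, hout]
    rw [Finset.sum_congr rfl he, hc, sub_self]
  -- translating between the ℂ-linear and the A-linear kernels/ranges
  have hkerlk : ∀ v : Finset ι → A, v ∈ LinearMap.ker Dl ↔ v ∈ LinearMap.ker D' := by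
    intro v
    constructor <;> intro hv <;> exact hv
  have hrngk : ∀ v : Finset ι → A, v ∈ LinearMap.range D' → v ∈ LinearMap.range Dl := by
    rintro v ⟨y, hy⟩; exact ⟨y, hy⟩
  have hTker : ∀ t ∈ T, t ∈ LinearMap.ker D' := by
    intro t ht
    rw [← hT]
    exact Submodule.subset_span ht
  let KerC := LinearMap.ker Dl
  let W := Submodule.comap KerC.subtype (LinearMap.range Dl)
  let gfun : (A ⧸ I₀) × (Finset ι → A) → ↥KerC := fun p =>
    if h : out p.1 • p.2 ∈ KerC then ⟨out p.1 • p.2, h⟩ else 0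
  have hgfun_coe : ∀ (q : A ⧸ I₀) (t : Finset ι → A), t ∈ LinearMap.ker D' →
      ((gfun (q, t) : ↥KerC) : Finset ι → A) = out q • t := by
    intro q t ht
    have hmem : out q • t ∈ KerC := by
      rw [hkerlk]
      exact Submodule.smul_mem _ _ ht
    show ((if h : out q • t ∈ KerC then (⟨out q • t, h⟩ : ↥KerC) else 0 : ↥KerC)
      : Finset ι → A) = out q • t
    rw [dif_pos hmem]
  -- assemble the finite-dimensionality proof
  refine Module.Finite.of_fg_top ⟨(TQ ×ˢ T).image (fun p => Submodule.Quotient.mk (p := W) (gfun p)), ?_⟩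
  rw [Submodule.eq_top_iff']
  intro w
  obtain ⟨xk, rfl⟩ := Submodule.Quotient.mk_surjective W w
  obtain ⟨x, hx⟩ := xk
  rw [← Submodule.mkQ_apply]
  have hxK : x ∈ LinearMap.ker D' := (hkerlk x).mp hx
  have hxT : x ∈ Submodule.span A (↑T : Set (Finset ι → A)) := by rw [hT]; exact hxK
  obtain ⟨g, -, hg⟩ := Submodule.mem_span_finset.mp hxT
  choose cf hcf using fun t => hrep (g t)
  set w0 : Finset ι → A := ∑ t ∈ T, (g t - ∑ q ∈ TQ, cf t q • out q) • t with hw0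
  have hw0ker : w0 ∈ LinearMap.ker D' := by
    rw [hw0]
    exact Submodule.sum_mem _ (fun t ht => Submodule.smul_mem _ _ (hTker t ht))
  have hw0rng : w0 ∈ LinearMap.range D' := by
    rw [hw0]
    exact Submodule.sum_mem _ (fun t ht => hJK _ (hIJ (hcf t)) t (hTker t ht))
  have hxdec : x = (∑ t ∈ T, ∑ q ∈ TQ, cf t q • (out q • t)) + w0 := by
    rw [hw0, ← Finset.sum_add_distrib]
    rw [← hg]
    apply Finset.sum_congr rfl
    intro t _
    rw [sub_smul, Finset.sum_smul]
    have : ∀ q ∈ TQ, (cf t q • out q) • t = cf t q • (out q • t) := by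
      intro q _
      rw [smul_assoc]
    rw [Finset.sum_congr rfl this]
    abel
  -- the same identity inside the kernel submodule
  have hxk_eq : (⟨x, hx⟩ : ↥KerC)
      = (∑ t ∈ T.attach, ∑ q ∈ TQ, cf t.1 q • gfun (q, t.1))
        + ⟨w0, (hkerlk w0).mpr hw0ker⟩ := by
    apply Subtype.ext
    push_cast
    rw [hxdec]
    congr 1
    rw [← Finset.sum_attach T (fun t => ∑ q ∈ TQ, cf t q • (out q • t))]
    apply Finset.sum_congr rfl
    intro t _
    apply Finset.sum_congr rfl
    intro q _
    rw [hgfun_coe q t.1 (hTker t.1 t.2)]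
  rw [hxk_eq, map_add, map_sum]
  have hzero : W.mkQ ⟨w0, (hkerlk w0).mpr hw0ker⟩ = 0 := by
    rw [Submodule.mkQ_apply, Submodule.Quotient.mk_eq_zero]
    exact hrngk w0 hw0rng
  rw [hzero, add_zero]
  apply Submodule.sum_mem
  intro t _
  rw [map_sum]
  apply Submodule.sum_mem
  intro q hq
  rw [map_smul]
  apply Submodule.smul_mem
  apply Submodule.subset_span
  exact Finset.mem_coe.mpr (Finset.mem_image_of_mem _ (Finset.mem_product.mpr ⟨hq, t.2⟩))

/-- For every non-degenerate coefficient function `f` and every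
`n₀ ∈ N`, the cohomology `W(f; n₀)` of the Koszul complex associated to the graded
pieces `z_{i,j}` of the elements `z_i` with respect to the `·n₀` grading is
finite-dimensional over `ℂ`. -/
theorem W_finite_dimensional
    (r : ℕ) (S : AddSubmonoid (Fin r → ℤ))
    (gens : Finset (Fin r → ℤ)) (hcone : IsConeSemigroup r S gens)
    (degd : Fin r → ℤ) (hgor : ∀ g ∈ gens, ∑ i, g i * degd i = 1)
    (Δfin : Finset ↥S)
    (hΔ : ∀ m : ↥S, m ∈ Δfin ↔ ∑ i, (m : Fin r → ℤ) i * degd i = 1)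
    (f : ↥Δfin → ℂ)
    (hnondeg : FiniteDimensional ℂ
      (SGA r S ⧸ Ideal.span (Set.range (zEl Δfin f))))
    (n₀ : Fin r → ℤ) :
    FiniteDimensional ℂ (Wcoh Δfin f n₀) := by
  classical
  haveI hFGS : AddMonoid.FG ↥S := gordan_aux hcone
  haveI hft : Algebra.FiniteType ℂ (SGA r S) := AddMonoidAlgebra.finiteType_of_fg ℂ ↥S
  haveI hNoeth : IsNoetherianRing (SGA r S) := Algebra.FiniteType.isNoetherianRing ℂ (SGA r S)
  have hinj : Function.Injective
      (fun e : Fin r × ↥(Igrades Δfin n₀) => (e.2 : ℤ) * r + (e.1 : ℤ)) := by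
    rintro ⟨i₁, j₁⟩ ⟨i₂, j₂⟩ h
    simp only at h
    have hi₁ : ((i₁ : ℕ) : ℤ) < (r : ℤ) := by exact_mod_cast i₁.2
    have hi₂ : ((i₂ : ℕ) : ℤ) < (r : ℤ) := by exact_mod_cast i₂.2
    have hi₁0 : (0:ℤ) ≤ ((i₁ : ℕ) : ℤ) := Int.ofNat_nonneg _
    have hi₂0 : (0:ℤ) ≤ ((i₂ : ℕ) : ℤ) := Int.ofNat_nonneg _
    have hj : (j₁ : ℤ) = (j₂ : ℤ) := by
      by_contra hne
      have h1 : 1 ≤ |(j₁ : ℤ) - (j₂ : ℤ)| := Int.one_le_abs (sub_ne_zero.mpr hne)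
      have h2 : ((j₁ : ℤ) - (j₂ : ℤ)) * r = ((i₂ : ℕ) : ℤ) - ((i₁ : ℕ) : ℤ) := by
        linear_combination h
      have h3 : |(((j₁ : ℤ) - (j₂ : ℤ)) * r)| = |((i₂ : ℕ) : ℤ) - ((i₁ : ℕ) : ℤ)| := by
        rw [h2]
      rw [abs_mul, abs_of_nonneg (by positivity : (0:ℤ) ≤ (r:ℤ))] at h3
      have h4 : |((i₂ : ℕ) : ℤ) - ((i₁ : ℕ) : ℤ)| < r := by rw [abs_lt]; omega
      nlinarith
    have hi : ((i₁ : ℕ) : ℤ) = ((i₂ : ℕ) : ℤ) := by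
      rw [hj] at h; linarith
    exact Prod.ext (Fin.ext (by exact_mod_cast hi)) (Subtype.ext hj)
  exact koszul_cohomology_finiteDimensional (zGraded Δfin f n₀) _ hinj
    (Ideal.span (Set.range (zEl Δfin f))) hnondeg
    (by rw [Ideal.span_le]; rintro x ⟨n, rfl⟩; exact zEl_mem_span Δfin f n₀ n)

end
end

section
/- Let Φ be a regular triangulation of the Gorenstein cone K given by a convexity function h: the partial semigroup ring ℂ[K]^Φ, with product [m]·[m₁] = [m+m₁] if m, m₁ lie in a common cone of Φ and 0 otherwise, is an associative commutative ring. -/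
open scoped Classical

/-- The product of the partial semigroup ring `ℂ[K]^Φ` associated to a decomposition `Φ`
(a collection of subsets of the semigroup `S = K ∩ M`): `[m]·[m₁] = [m + m₁]` if `m, m₁`
lie in a common cone of `Φ`, and `0` otherwise, extended bilinearly. -/
noncomputable def partialMul {S : Type*} [AddCommMonoid S] (Φ : Set (Set S))
    (f g : S →₀ ℂ) : S →₀ ℂ :=
  f.sum fun m a => g.sum fun m₁ b =>
    if ∃ C ∈ Φ, m ∈ C ∧ m₁ ∈ C then Finsupp.single (m + m₁) (a * b) else 0

section aux
variable {S : Type*} [AddCommMonoid S] (Φ : Set (Set S))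

lemma pm_inner_zero (m m₁ : S) (a : ℂ) :
    (if ∃ C ∈ Φ, m ∈ C ∧ m₁ ∈ C then Finsupp.single (m + m₁) (a * 0) else 0) = 0 := by
  split <;> simp

lemma pm_zero_left (g : S →₀ ℂ) : partialMul Φ 0 g = 0 := by
  simp [partialMul]

lemma pm_zero_right (f : S →₀ ℂ) : partialMul Φ f 0 = 0 := by
  simp [partialMul]

lemma pm_add_left (f f' g : S →₀ ℂ) :
    partialMul Φ (f + f') g = partialMul Φ f g + partialMul Φ f' g := by
  unfold partialMul
  apply Finsupp.sum_add_index'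
  · intro m
    rw [Finsupp.sum]; apply Finset.sum_eq_zero
    intro m₁ _
    split <;> simp
  · intro m a a'
    rw [← Finsupp.sum_add]
    apply Finsupp.sum_congr
    intro m₁ _
    split <;> simp [add_mul, Finsupp.single_add]

lemma pm_add_right (f g g' : S →₀ ℂ) :
    partialMul Φ f (g + g') = partialMul Φ f g + partialMul Φ f g' := by
  unfold partialMul
  rw [← Finsupp.sum_add]
  apply Finsupp.sum_congr
  intro m _
  apply Finsupp.sum_add_index'
  · intro m₁; split <;> simp
  · intro m₁ b b'; split <;> simp [mul_add, Finsupp.single_add]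

lemma pm_single_single (m m₁ : S) (a b : ℂ) :
    partialMul Φ (Finsupp.single m a) (Finsupp.single m₁ b) =
      if ∃ C ∈ Φ, m ∈ C ∧ m₁ ∈ C then Finsupp.single (m + m₁) (a * b) else 0 := by
  unfold partialMul
  rw [Finsupp.sum_single_index, Finsupp.sum_single_index]
  · split <;> simp
  · rw [Finsupp.sum]; apply Finset.sum_eq_zero
    intro m₁ _
    split <;> simp

lemma pm_comm (f g : S →₀ ℂ) : partialMul Φ f g = partialMul Φ g f := by
  unfold partialMul
  rw [Finsupp.sum_comm]
  apply Finsupp.sum_congr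
  intro m _
  apply Finsupp.sum_congr
  intro m₁ _
  rw [add_comm m₁ m, mul_comm]
  congr 1
  exact propext ⟨fun ⟨C, hC, h1, h2⟩ => ⟨C, hC, h2, h1⟩, fun ⟨C, hC, h1, h2⟩ => ⟨C, hC, h2, h1⟩⟩

end aux

/-- Let `K ⊆ M_ℚ` be a rational polyhedral cone with lattice semigroup
`S = K ∩ M ⊆ ℤ^r` and let `Φ` be a regular triangulation of `K`, witnessed by a convexity
function `h` (integer-valued on lattice points, superadditive, with
`h(x+y) = h(x) + h(y)` iff `x` and `y` lie in a common cone of `Φ`).  Then the partial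
semigroup ring `ℂ[K]^Φ`, with product `[m]·[m₁] = [m+m₁]` if `m, m₁` lie in a common cone
of `Φ` and `0` otherwise, is an associative commutative ring: the product is commutative,
associative, and bi-additive. -/
theorem partial_semigroup_ring_is_ring
    (r : ℕ) (S : AddSubmonoid (Fin r → ℤ))
    -- `S` consists of the lattice points of the cone generated by `gens`:
    (gens : Finset (Fin r → ℤ))
    (hS : ∀ m : Fin r → ℤ, m ∈ S ↔ ∃ c : (Fin r → ℤ) → ℚ,
      (∀ g ∈ gens, 0 ≤ c g) ∧ ∀ i, (m i : ℚ) = ∑ g ∈ gens, c g * (g i : ℚ))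
    -- the regular triangulation `Φ` with its convexity function `h`:
    (Φ : Set (Set ↥S)) (h : ↥S → ℤ)
    (hsuper : ∀ x y : ↥S, h x + h y ≤ h (x + y))
    (hΦ : ∀ x y : ↥S, h (x + y) = h x + h y ↔ ∃ C ∈ Φ, x ∈ C ∧ y ∈ C) :
    (∀ f g : ↥S →₀ ℂ, partialMul Φ f g = partialMul Φ g f) ∧
    (∀ f g k : ↥S →₀ ℂ,
      partialMul Φ (partialMul Φ f g) k = partialMul Φ f (partialMul Φ g k)) ∧
    (∀ f g k : ↥S →₀ ℂ,
      partialMul Φ (f + g) k = partialMul Φ f k + partialMul Φ g k) ∧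
    (∀ f g k : ↥S →₀ ℂ,
      partialMul Φ f (g + k) = partialMul Φ f g + partialMul Φ f k) := by
  have key : ∀ m m₁ m₂ : ↥S,
      ((∃ C ∈ Φ, m ∈ C ∧ m₁ ∈ C) ∧ (∃ C ∈ Φ, m + m₁ ∈ C ∧ m₂ ∈ C)) ↔
      ((∃ C ∈ Φ, m₁ ∈ C ∧ m₂ ∈ C) ∧ (∃ C ∈ Φ, m ∈ C ∧ m₁ + m₂ ∈ C)) := by
    intro m m₁ m₂
    rw [← hΦ, ← hΦ, ← hΦ, ← hΦ]
    have e1 := hsuper m m₁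
    have e2 := hsuper (m + m₁) m₂
    have e3 := hsuper m₁ m₂
    have e4 := hsuper m (m₁ + m₂)
    simp only [add_assoc] at e2 ⊢
    constructor
    · rintro ⟨a, b⟩; rw [a] at b; omega
    · rintro ⟨a, b⟩; rw [a] at b; omega
  have assoc_single : ∀ (m m₁ m₂ : ↥S) (a b c : ℂ),
      partialMul Φ (partialMul Φ (Finsupp.single m a) (Finsupp.single m₁ b))
        (Finsupp.single m₂ c) =
      partialMul Φ (Finsupp.single m a)
        (partialMul Φ (Finsupp.single m₁ b) (Finsupp.single m₂ c)) := by
    intro m m₁ m₂ a b c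
    rw [pm_single_single, pm_single_single]
    by_cases h1 : ∃ C ∈ Φ, m ∈ C ∧ m₁ ∈ C
    · by_cases h2 : ∃ C ∈ Φ, m₁ ∈ C ∧ m₂ ∈ C
      · rw [if_pos h1, if_pos h2, pm_single_single, pm_single_single]
        have hiff : (∃ C ∈ Φ, m + m₁ ∈ C ∧ m₂ ∈ C) ↔ (∃ C ∈ Φ, m ∈ C ∧ m₁ + m₂ ∈ C) :=
          ⟨fun hx => ((key m m₁ m₂).mp ⟨h1, hx⟩).2,
           fun hx => ((key m m₁ m₂).mpr ⟨h2, hx⟩).2⟩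
        by_cases h3 : ∃ C ∈ Φ, m + m₁ ∈ C ∧ m₂ ∈ C
        · rw [if_pos h3, if_pos (hiff.mp h3), add_assoc, mul_assoc]
        · rw [if_neg h3, if_neg (fun hx => h3 (hiff.mpr hx))]
      · rw [if_pos h1, if_neg h2, pm_single_single, pm_zero_right, if_neg]
        intro hx
        exact h2 ((key m m₁ m₂).mp ⟨h1, hx⟩).1
    · rw [if_neg h1, pm_zero_left]
      by_cases h2 : ∃ C ∈ Φ, m₁ ∈ C ∧ m₂ ∈ C
      · rw [if_pos h2, pm_single_single, if_neg]
        intro hx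
        exact h1 ((key m m₁ m₂).mpr ⟨h2, hx⟩).1
      · rw [if_neg h2, pm_zero_right]
  refine ⟨pm_comm Φ, ?_, pm_add_left Φ, pm_add_right Φ⟩
  intro f g k
  induction f using Finsupp.induction_linear with
  | zero => simp [pm_zero_left]
  | add f f' hf hf' => simp [pm_add_left, hf, hf']
  | single m a =>
    induction g using Finsupp.induction_linear with
    | zero => simp [pm_zero_left, pm_zero_right]
    | add g g' hg hg' => simp [pm_add_left, pm_add_right, hg, hg']
    | single m₁ b =>
      induction k using Finsupp.induction_linear with
      | zero => simp [pm_zero_right]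
      | add k k' hk hk' => simp [pm_add_right, hk, hk']
      | single m₂ c => exact assoc_single m m₁ m₂ a b c
end

section
/- Degeneration of ℂ[K] to ℂ[K]^Φ: define a family of products *_q on the vector space ℂ[K∩M] by [m] *_q [m₁] = q^{h(m+m₁)−h(m)−h(m₁)} [m+m₁]. Then for every q ≠ 0 the ring (ℂ[K∩M], *_q) is isomorphic to ℂ[K] via the rescaling [m] ↦ q^{h(m)}[m], and at q = 0 the product *_0 equals the product of the partial semigroup ring ℂ[K]^Φ. -/
open scoped Classical

/-- The ordinary convolution product of the semigroup ring `ℂ[K] = ℂ[S]`. -/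
noncomputable def semigroupMul {S : Type*} [AddCommMonoid S] (f g : S →₀ ℂ) : S →₀ ℂ :=
  f.sum fun m a => g.sum fun m₁ b => Finsupp.single (m + m₁) (a * b)

/-- The degenerating family of products `*_q` on the vector space `ℂ[S]`:
`[m] *_q [m₁] = q^{h(m+m₁) − h(m) − h(m₁)} [m+m₁]` (the exponent is a nonnegative
integer by superadditivity of `h`). -/
noncomputable def qMul {S : Type*} [AddCommMonoid S] (h : S → ℤ) (q : ℂ)
    (f g : S →₀ ℂ) : S →₀ ℂ :=
  f.sum fun m a => g.sum fun m₁ b =>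
    Finsupp.single (m + m₁) (q ^ (h (m + m₁) - h m - h m₁).toNat * (a * b))

/-- The product of the partial semigroup ring `ℂ[K]^Φ`, the cones of `Φ` being encoded by
the convexity function `h`: `[m]·[m₁] = [m+m₁]` if `h(m+m₁) = h(m) + h(m₁)` (i.e. iff
`m, m₁` lie in a common cone of `Φ`) and `0` otherwise. -/
noncomputable def partialMulH {S : Type*} [AddCommMonoid S] (h : S → ℤ)
    (f g : S →₀ ℂ) : S →₀ ℂ :=
  f.sum fun m a => g.sum fun m₁ b =>
    if h (m + m₁) = h m + h m₁ then Finsupp.single (m + m₁) (a * b) else 0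

/-- The rescaling `[m] ↦ q^{h(m)} [m]` of `ℂ[S]` (for `q ≠ 0`). -/
noncomputable def rescale {S : Type*} [AddCommMonoid S] (h : S → ℤ) (q : ℂ)
    (f : S →₀ ℂ) : S →₀ ℂ :=
  f.sum fun m a => Finsupp.single m (q ^ (h m) * a)

lemma rescale_apply {S : Type*} [AddCommMonoid S] (h : S → ℤ) (q : ℂ) (f : S →₀ ℂ) (m : S) :
    rescale h q f m = q ^ h m * f m := by
  classical
  rw [rescale, Finsupp.sum_apply, Finsupp.sum]
  simp only [Finsupp.single_apply]
  rw [Finset.sum_ite_eq' f.support m (fun m' => q ^ h m' * f m')]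
  split_ifs with hm
  · rfl
  · rw [Finsupp.notMem_support_iff.mp hm, mul_zero]

lemma sum_rescale {S : Type*} [AddCommMonoid S] {N : Type*} [AddCommMonoid N]
    (h : S → ℤ) {q : ℂ} (hq : q ≠ 0) (f : S →₀ ℂ) (φ : S → ℂ → N) :
    (rescale h q f).sum φ = f.sum fun m a => φ m (q ^ h m * a) := by
  have hsupp : (rescale h q f).support = f.support := by
    ext m
    simp [Finsupp.mem_support_iff, rescale_apply, zpow_ne_zero _ hq]
  rw [Finsupp.sum, Finsupp.sum, hsupp]
  exact Finset.sum_congr rfl fun m _ => by rw [rescale_apply]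

noncomputable def rescaleHom {S : Type*} [AddCommMonoid S] (h : S → ℤ) (q : ℂ) :
    (S →₀ ℂ) →+ (S →₀ ℂ) where
  toFun := rescale h q
  map_zero' := by ext m; simp [rescale_apply]
  map_add' f g := by ext m; simp [rescale_apply]; ring

lemma rescale_single {S : Type*} [AddCommMonoid S] (h : S → ℤ) (q : ℂ) (k : S) (c : ℂ) :
    rescale h q (Finsupp.single k c) = Finsupp.single k (q ^ h k * c) := by
  classical
  ext m
  rw [rescale_apply, Finsupp.single_apply, Finsupp.single_apply]
  split_ifs with hk
  · subst hk; rfl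
  · rw [mul_zero]


/-- (Degeneration of `ℂ[K]` to `ℂ[K]^Φ`.)  Let `S = K ∩ M` be the
lattice semigroup of a rational polyhedral cone `K` and let `Φ` be a regular
triangulation of `K` with convexity function `h : S → ℤ` satisfying
`h(m+m₁) ≥ h(m) + h(m₁)`, with equality iff `m, m₁` lie in a common cone of `Φ`.
Define the family of products `*_q` on `ℂ[S]` by
`[m] *_q [m₁] = q^{h(m+m₁)−h(m)−h(m₁)} [m+m₁]`.  Then for every `q ≠ 0` the ring
`(ℂ[S], *_q)` is isomorphic to the ordinary semigroup ring `ℂ[K]` via the bijective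
rescaling `[m] ↦ q^{h(m)} [m]`, and at `q = 0` the product `*_0` equals the product of
the partial semigroup ring `ℂ[K]^Φ`. -/
theorem degeneration_to_partial_semigroup_ring
    (r : ℕ) (S : AddSubmonoid (Fin r → ℤ))
    (gens : Finset (Fin r → ℤ))
    (hS : ∀ m : Fin r → ℤ, m ∈ S ↔ ∃ c : (Fin r → ℤ) → ℚ,
      (∀ g ∈ gens, 0 ≤ c g) ∧ ∀ i, (m i : ℚ) = ∑ g ∈ gens, c g * (g i : ℚ))
    (Φ : Set (Set ↥S)) (h : ↥S → ℤ)
    (hsuper : ∀ x y : ↥S, h x + h y ≤ h (x + y))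
    (hΦ : ∀ x y : ↥S, h (x + y) = h x + h y ↔ ∃ C ∈ Φ, x ∈ C ∧ y ∈ C) :
    (∀ q : ℂ, q ≠ 0 →
      Function.Bijective (rescale (S := ↥S) h q) ∧
      ∀ f g : ↥S →₀ ℂ,
        rescale h q (semigroupMul f g) = qMul h q (rescale h q f) (rescale h q g)) ∧
    (∀ f g : ↥S →₀ ℂ, qMul h 0 f g = partialMulH h f g) := by
  constructor
  · intro q hq
    constructor
    · refine Function.bijective_iff_has_inverse.mpr ⟨rescale h q⁻¹, fun f => ?_, fun f => ?_⟩
      · ext m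
        rw [rescale_apply, rescale_apply, ← mul_assoc, inv_zpow,
          inv_mul_cancel₀ (zpow_ne_zero _ hq), one_mul]
      · ext m
        rw [rescale_apply, rescale_apply, ← mul_assoc, inv_zpow,
          mul_inv_cancel₀ (zpow_ne_zero _ hq), one_mul]
    · intro f g
      have key : ∀ (m m₁ : ↥S) (a b : ℂ),
          q ^ (h (m + m₁) - h m - h m₁).toNat * ((q ^ h m * a) * (q ^ h m₁ * b))
            = q ^ h (m + m₁) * (a * b) := by
        intro m m₁ a b
        have hd : (0 : ℤ) ≤ h (m + m₁) - h m - h m₁ := by have := hsuper m m₁; omega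
        calc q ^ (h (m + m₁) - h m - h m₁).toNat * ((q ^ h m * a) * (q ^ h m₁ * b))
            = (q ^ (h (m + m₁) - h m - h m₁) * (q ^ h m * q ^ h m₁)) * (a * b) := by
              rw [← zpow_natCast q, Int.toNat_of_nonneg hd]; ring
          _ = q ^ ((h (m + m₁) - h m - h m₁) + (h m + h m₁)) * (a * b) := by
              rw [← zpow_add₀ hq, ← zpow_add₀ hq]
          _ = q ^ h (m + m₁) * (a * b) := by norm_num
      -- compute the left-hand side
      have lhs : rescale h q (semigroupMul f g)
          = f.sum fun m a => g.sum fun m₁ b =>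
              Finsupp.single (m + m₁) (q ^ h (m + m₁) * (a * b)) := by
        show rescaleHom h q (semigroupMul f g) = _
        rw [semigroupMul, map_finsuppSum]
        refine Finsupp.sum_congr fun m _ => ?_
        rw [map_finsuppSum]
        exact Finsupp.sum_congr fun m₁ _ => rescale_single h q _ _
      rw [lhs, qMul, sum_rescale h hq]
      refine Finsupp.sum_congr fun m _ => ?_
      rw [sum_rescale h hq]
      refine Finsupp.sum_congr fun m₁ _ => ?_
      rw [key]
  · intro f g
    rw [qMul, partialMulH]
    refine Finsupp.sum_congr fun m _ => Finsupp.sum_congr fun m₁ _ => ?_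
    split_ifs with he
    · have : (h (m + m₁) - h m - h m₁).toNat = 0 := by omega
      rw [this, pow_zero, one_mul]
    · have hd : 0 < h (m + m₁) - h m - h m₁ := by have := hsuper m m₁; omega
      rw [zero_pow (by omega : (h (m + m₁) - h m - h m₁).toNat ≠ 0), zero_mul,
        Finsupp.single_zero]
end
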